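/- arXiv:1911.09897 — 5 statements merged into one kernel-verified Lean document; each statement's English description precedes it below -/
import Mathlib

section
/- Let K ≥ 2 and let LY(σ_K) ⊆ Σ_K × Σ_K be the set of Li–Yorke pairs of the shift σ_K. Then dim_H LY(σ_K) = 2 and the 2-dimensional Hausdorff measure of LY(σ_K) equals 1. -/
open Filter Set MeasureTheory Topology TopologicalSpace

noncomputable section

/-- The symbolic space `Σ_K` on `K` symbols: sequences `ℕ → Fin K`. -/
def SymbSp (K : ℕ) : Type := ℕ → Fin K

namespace SymbSp

variable {K : ℕ}

theorem exists_ne {x y : SymbSp K} (h : ¬x = y) : ∃ i, x i ≠ y i := by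
  by_contra hc
  push_neg at hc
  exact h (funext hc)

open Classical in
/-- The metric `ρ(x,y) = K^{-δ(x,y)}` on `Σ_K`. -/
def sdist (x y : SymbSp K) : ℝ :=
  if h : x = y then 0 else ((K : ℝ))⁻¹ ^ Nat.find (exists_ne h)

theorem sdist_self (x : SymbSp K) : sdist x x = 0 := by
  unfold sdist
  exact dif_pos rfl

open Classical in
theorem sdist_eq {x y : SymbSp K} (h : ¬x = y) :
    sdist x y = ((K : ℝ))⁻¹ ^ Nat.find (exists_ne h) := by
  unfold sdist
  exact dif_neg h

theorem sdist_nonneg' (x y : SymbSp K) : 0 ≤ sdist x y := by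
  unfold sdist
  split
  · exact le_rfl
  · positivity

theorem inv_cast_le_one (K : ℕ) : ((K : ℝ))⁻¹ ≤ 1 := by
  rcases Nat.eq_zero_or_pos K with h | h
  · simp [h]
  · exact inv_le_one_of_one_le₀ (by exact_mod_cast h)

open Classical in
theorem eq_of_lt_find {x y : SymbSp K} (h : ¬x = y) {i : ℕ}
    (hi : i < Nat.find (exists_ne h)) : x i = y i :=
  not_not.mp (Nat.find_min (exists_ne h) hi)

open Classical in
theorem sdist_le_of_agree {x y : SymbSp K} {n : ℕ} (h : ∀ i < n, x i = y i) :
    sdist x y ≤ ((K : ℝ))⁻¹ ^ n := by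
  by_cases hxy : x = y
  · rw [hxy, sdist_self]; positivity
  · rw [sdist_eq hxy]
    apply pow_le_pow_of_le_one (by positivity) (inv_cast_le_one K)
    rw [Nat.le_find_iff]
    intro m hm
    simp only [ne_eq, not_not]
    exact h m hm

open Classical in
theorem sdist_comm (x y :  SymbSp K) : sdist x y = sdist y x := by
  by_cases h : x = y
  · rw [h]
  · rw [sdist_eq h, sdist_eq (fun hyx => h hyx.symm)]
    congr 1
    exact le_antisymm (Nat.find_mono fun n hn => hn.symm)
      (Nat.find_mono fun n hn => hn.symm)

open Classical in
theorem sdist_le_max (x y z : SymbSp K) : sdist x z ≤ max (sdist x y) (sdist y z) := by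
  by_cases hxz : x = z
  · rw [hxz, sdist_self]
    exact le_max_of_le_left (sdist_nonneg' _ _)
  by_cases hxy : x = y
  · rw [hxy]; exact le_max_right _ _
  by_cases hyz : y = z
  · rw [← hyz]; exact le_max_left _ _
  rcases le_total (Nat.find (exists_ne hxy)) (Nat.find (exists_ne hyz)) with hle | hle
  · refine le_max_of_le_left ?_
    rw [sdist_eq hxy]
    exact sdist_le_of_agree fun i hi =>
      (eq_of_lt_find hxy hi).trans (eq_of_lt_find hyz (lt_of_lt_of_le hi hle))
  · refine le_max_of_le_right ?_
    rw [sdist_eq hyz]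
    exact sdist_le_of_agree fun i hi =>
      (eq_of_lt_find hxy (lt_of_lt_of_le hi hle)).trans (eq_of_lt_find hyz hi)

theorem eq_of_sdist_eq_zero {x y : SymbSp K} (h : sdist x y = 0) : x = y := by
  by_contra hxy
  rw [sdist_eq hxy] at h
  have hK : (0 : ℝ) < (K : ℝ) := by exact_mod_cast Fin.pos (x 0)
  exact absurd h (ne_of_gt (pow_pos (inv_pos.mpr hK) _))

instance : MetricSpace (SymbSp K) where
  dist := sdist
  dist_self := sdist_self
  dist_comm := sdist_comm
  dist_triangle x y z :=
    (sdist_le_max x y z).trans (max_le_add_of_nonneg (sdist_nonneg' _ _) (sdist_nonneg' _ _))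
  eq_of_dist_eq_zero := fun h => eq_of_sdist_eq_zero h

instance : MeasurableSpace (SymbSp K) := borel _

instance : BorelSpace (SymbSp K) := ⟨rfl⟩

instance : SeparableSpace (SymbSp K) := by
  obtain hK | hK | hK : K = 0 ∨ K = 1 ∨ 2 ≤ K := by omega
  · subst hK
    haveI : IsEmpty (SymbSp 0) := ⟨fun x => (x 0).elim0⟩
    exact ⟨⟨Set.univ, Set.countable_univ, dense_univ⟩⟩
  · subst hK
    haveI : Subsingleton (SymbSp 1) := ⟨fun x y => funext fun i => Subsingleton.elim _ _⟩
    exact ⟨⟨Set.univ, Set.countable_univ, dense_univ⟩⟩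
  · refine ⟨⟨Set.range (fun w : (Σ n : ℕ, (Fin n → Fin K)) =>
      (fun i => if h : i < w.1 then w.2 ⟨i, h⟩ else ⟨0, by omega⟩ : SymbSp K)),
      Set.countable_range _, ?_⟩⟩
    rw [Metric.dense_iff]
    intro x r hr
    obtain ⟨n, hn⟩ : ∃ n : ℕ, ((K : ℝ))⁻¹ ^ n < r :=
      exists_pow_lt_of_lt_one hr (inv_lt_one_of_one_lt₀ (by exact_mod_cast hK))
    refine ⟨(fun i => if h : i < n then x i else ⟨0, by omega⟩ : SymbSp K),
      ?_, ⟨⟨n, fun j => x j⟩, rfl⟩⟩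
    show sdist _ x < r
    exact lt_of_le_of_lt (sdist_le_of_agree fun i hi => dif_pos hi) hn

instance : SecondCountableTopology (SymbSp K) :=
  UniformSpace.secondCountable_of_separable _

end SymbSp

/-- The shift map `σ_K` on `Σ_K`. -/
def shift (K : ℕ) : SymbSp K → SymbSp K := fun x i => x (i + 1)

end
/-- The set of Li–Yorke pairs of `σ_K`. -/
def LYset (K : ℕ) : Set (SymbSp K × SymbSp K) :=
  {z | Filter.liminf (fun i : ℕ => dist ((shift K)^[i] z.1) ((shift K)^[i] z.2))
          Filter.atTop = 0 ∧
       0 < Filter.limsup (fun i : ℕ => dist ((shift K)^[i] z.1) ((shift K)^[i] z.2))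
          Filter.atTop}

section Aux

open SymbSp ENNReal

variable {K : ℕ}

lemma shift_iter (x : SymbSp K) (i j : ℕ) : (shift K)^[i] x j = x (j + i) := by
  induction i generalizing x j with
  | zero => rfl
  | succ n ih =>
    rw [Function.iterate_succ_apply, ih (shift K x) j]
    rfl

lemma dist_def (x y : SymbSp K) : dist x y = sdist x y := rfl

lemma sdist_le_one (x y : SymbSp K) : dist x y ≤ 1 := by
  by_cases h : x = y
  · simp [h, dist_def, sdist_self]
  · rw [dist_def, sdist_eq h]
    exact pow_le_one₀ (by positivity) (inv_cast_le_one K)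

lemma dist_nonneg' (x y : SymbSp K) : 0 ≤ dist x y := dist_nonneg

open Classical in
lemma dist_shift_eq_one {x y : SymbSp K} {i : ℕ} (h : x i ≠ y i) :
    dist ((shift K)^[i] x) ((shift K)^[i] y) = 1 := by
  have hne : ¬ (shift K)^[i] x = (shift K)^[i] y := by
    intro he
    apply h
    have := congrFun he 0
    rwa [shift_iter, shift_iter, Nat.zero_add] at this
  rw [dist_def, sdist_eq hne]
  have h0 : Nat.find (exists_ne hne) = 0 := by
    rw [Nat.find_eq_zero]
    rw [shift_iter, shift_iter, Nat.zero_add]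
    exact h
  rw [h0, pow_zero]

lemma dist_shift_le {x y : SymbSp K} {i n : ℕ} (h : ∀ j < n, x (j + i) = y (j + i)) :
    dist ((shift K)^[i] x) ((shift K)^[i] y) ≤ ((K : ℝ))⁻¹ ^ n := by
  rw [dist_def]
  apply sdist_le_of_agree
  intro j hj
  rw [shift_iter, shift_iter]
  exact h j hj

lemma edist_le_pow (hK : 0 < K) {x y : SymbSp K} {n : ℕ} (h : ∀ i < n, x i = y i) :
    edist x y ≤ ((K : ℝ≥0∞))⁻¹ ^ n := by
  rw [edist_dist]
  have h1 : dist x y ≤ (K : ℝ)⁻¹ ^ n := sdist_le_of_agree h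
  calc ENNReal.ofReal (dist x y) ≤ ENNReal.ofReal ((K : ℝ)⁻¹ ^ n) :=
        ENNReal.ofReal_le_ofReal h1
    _ = ((K : ℝ≥0∞))⁻¹ ^ n := by
        rw [ENNReal.ofReal_pow (by positivity)]
        congr 1
        rw [ENNReal.ofReal_inv_of_pos (by exact_mod_cast hK), ENNReal.ofReal_natCast]

lemma diam_le_of_agree (hK : 0 < K) {s : Set (SymbSp K × SymbSp K)} {n : ℕ}
    (h : ∀ z ∈ s, ∀ w ∈ s, (∀ i < n, z.1 i = w.1 i) ∧ (∀ i < n, z.2 i = w.2 i)) :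
    EMetric.diam s ≤ ((K : ℝ≥0∞))⁻¹ ^ n :=
  EMetric.diam_le fun z hz w hw => by
    rcases h z hz w hw with ⟨h1, h2⟩
    calc edist z w = max (edist z.1 w.1) (edist z.2 w.2) := Prod.edist_eq z w
      _ ≤ _ := max_le (edist_le_pow hK h1) (edist_le_pow hK h2)

lemma eK_lt_one (hK : 2 ≤ K) : ((K : ℝ≥0∞))⁻¹ < 1 :=
  ENNReal.inv_lt_one.mpr (by exact_mod_cast Nat.lt_of_lt_of_le one_lt_two hK)

lemma eK_pow_tendsto (hK : 2 ≤ K) :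
    Filter.Tendsto (fun n : ℕ => ((K : ℝ≥0∞))⁻¹ ^ n) atTop (𝓝 0) :=
  ENNReal.tendsto_pow_atTop_nhds_zero_of_lt_one (eK_lt_one hK)

lemma K_pow_mul_inv_pow (hK : 0 < K) (n : ℕ) :
    ((K : ℝ≥0∞)) ^ n * ((K : ℝ≥0∞))⁻¹ ^ n = 1 := by
  rw [← ENNReal.inv_pow, ENNReal.mul_inv_cancel]
  · exact pow_ne_zero _ (by exact_mod_cast hK.ne')
  · exact ENNReal.pow_ne_top (ENNReal.natCast_ne_top K)

lemma rpow_two_eq (a : ℝ≥0∞) : a ^ (2 : ℝ) = a * a := by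
  rw [show (2 : ℝ) = ((2 : ℕ) : ℝ) by norm_num, ENNReal.rpow_natCast, sq]

/-- Upper bound: `μH[2]` of the whole product space is at most 1. -/
lemma hm_univ_le (hK : 2 ≤ K) :
    μH[2] (Set.univ : Set (SymbSp K × SymbSp K)) ≤ 1 := by
  have hK0 : 0 < K := by omega
  set eK : ℝ≥0∞ := ((K : ℝ≥0∞))⁻¹ with heK
  have hle := MeasureTheory.Measure.hausdorffMeasure_le_liminf_sum (d := 2)
    (s := (Set.univ : Set (SymbSp K × SymbSp K))) (l := atTop)
    (fun n : ℕ => eK ^ n) (eK_pow_tendsto hK)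
    (fun n (p : (Fin n → Fin K) × (Fin n → Fin K)) =>
      {z | (∀ i : Fin n, z.1 (i : ℕ) = p.1 i) ∧ (∀ i : Fin n, z.2 (i : ℕ) = p.2 i)})
    (by
      refine Filter.Eventually.of_forall fun n => fun p => ?_
      refine diam_le_of_agree hK0 fun z hz w hw => ?_
      rcases hz with ⟨hz1, hz2⟩
      rcases hw with ⟨hw1, hw2⟩
      constructor
      · intro i hi
        rw [hz1 ⟨i, hi⟩, hw1 ⟨i, hi⟩]
      · intro i hi
        rw [hz2 ⟨i, hi⟩, hw2 ⟨i, hi⟩])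
    (by
      refine Filter.Eventually.of_forall fun n => fun z _ => ?_
      refine Set.mem_iUnion.mpr ⟨(fun i => z.1 (i : ℕ), fun i => z.2 (i : ℕ)), ?_⟩
      exact ⟨fun i => rfl, fun i => rfl⟩)
  refine hle.trans ?_
  refine Filter.liminf_le_of_frequently_le' (Filter.Eventually.frequently
    (Filter.Eventually.of_forall fun n => ?_))
  calc ∑ p : (Fin n → Fin K) × (Fin n → Fin K),
        EMetric.diam {z : SymbSp K × SymbSp K |
          (∀ i : Fin n, z.1 (i : ℕ) = p.1 i) ∧ (∀ i : Fin n, z.2 (i : ℕ) = p.2 i)} ^ (2 : ℝ)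
      ≤ ∑ _p : (Fin n → Fin K) × (Fin n → Fin K), (eK ^ n) ^ (2 : ℝ) := by
        refine Finset.sum_le_sum fun p _ => ?_
        refine ENNReal.rpow_le_rpow ?_ (by norm_num)
        refine diam_le_of_agree hK0 fun z hz w hw => ?_
        rcases hz with ⟨hz1, hz2⟩
        rcases hw with ⟨hw1, hw2⟩
        exact ⟨fun i hi => by rw [hz1 ⟨i, hi⟩, hw1 ⟨i, hi⟩],
               fun i hi => by rw [hz2 ⟨i, hi⟩, hw2 ⟨i, hi⟩]⟩
    _ = 1 := by
        rw [Finset.sum_const, nsmul_eq_mul]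
        rw [Finset.card_univ, Fintype.card_prod, Fintype.card_fun, Fintype.card_fin,
          Fintype.card_fin]
        rw [rpow_two_eq]
        push_cast
        rw [show ((K : ℝ≥0∞) ^ n * (K : ℝ≥0∞) ^ n) * (eK ^ n * eK ^ n)
            = ((K : ℝ≥0∞) ^ n * eK ^ n) * ((K : ℝ≥0∞) ^ n * eK ^ n) by ring]
        rw [heK, K_pow_mul_inv_pow hK0, one_mul]

/-- Pairs that agree from coordinate `N` on. -/
def ASet (K N : ℕ) : Set (SymbSp K × SymbSp K) := {z | ∀ i, N ≤ i → z.1 i = z.2 i}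

lemma hm_ASet (hK : 2 ≤ K) (N : ℕ) : μH[2] (ASet K N) = 0 := by
  have hK0 : 0 < K := by omega
  set eK : ℝ≥0∞ := ((K : ℝ≥0∞))⁻¹ with heK
  have hle := MeasureTheory.Measure.hausdorffMeasure_le_liminf_sum (d := 2)
    (s := ASet K N) (l := atTop)
    (fun n : ℕ => eK ^ n) (eK_pow_tendsto hK)
    (fun n (p : (Fin n → Fin K) × (Fin N → Fin K)) =>
      {z | (∀ i : Fin n, z.1 (i : ℕ) = p.1 i) ∧ (∀ i : Fin N, z.2 (i : ℕ) = p.2 i)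
          ∧ ∀ i, N ≤ i → z.1 i = z.2 i})
    (by
      filter_upwards [Filter.eventually_ge_atTop N] with n hn p
      refine diam_le_of_agree hK0 fun z hz w hw => ?_
      rcases hz with ⟨hz1, hz2, hz3⟩
      rcases hw with ⟨hw1, hw2, hw3⟩
      have h1 : ∀ i < n, z.1 i = w.1 i := fun i hi => by
        rw [hz1 ⟨i, hi⟩, hw1 ⟨i, hi⟩]
      refine ⟨h1, fun i hi => ?_⟩
      by_cases hiN : i < N
      · rw [hz2 ⟨i, hiN⟩, hw2 ⟨i, hiN⟩]
      · push_neg at hiN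
        rw [← hz3 i hiN, ← hw3 i hiN]
        exact h1 i hi)
    (by
      refine Filter.Eventually.of_forall fun n => fun z hz => ?_
      refine Set.mem_iUnion.mpr ⟨(fun i => z.1 (i : ℕ), fun i => z.2 (i : ℕ)), ?_⟩
      exact ⟨fun i => rfl, fun i => rfl, hz⟩)
  refine le_antisymm (hle.trans ?_) zero_le
  have hbound : ∀ n : ℕ, N ≤ n →
      (∑ p : (Fin n → Fin K) × (Fin N → Fin K),
        EMetric.diam {z : SymbSp K × SymbSp K |
          (∀ i : Fin n, z.1 (i : ℕ) = p.1 i) ∧ (∀ i : Fin N, z.2 (i : ℕ) = p.2 i)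
          ∧ ∀ i, N ≤ i → z.1 i = z.2 i} ^ (2 : ℝ))
      ≤ (K : ℝ≥0∞) ^ N * eK ^ n := by
    intro n hn
    calc _ ≤ ∑ _p : (Fin n → Fin K) × (Fin N → Fin K), (eK ^ n) ^ (2 : ℝ) := by
            refine Finset.sum_le_sum fun p _ => ?_
            refine ENNReal.rpow_le_rpow ?_ (by norm_num)
            refine diam_le_of_agree hK0 fun z hz w hw => ?_
            rcases hz with ⟨hz1, hz2, hz3⟩
            rcases hw with ⟨hw1, hw2, hw3⟩
            have h1 : ∀ i < n, z.1 i = w.1 i := fun i hi => by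
              rw [hz1 ⟨i, hi⟩, hw1 ⟨i, hi⟩]
            refine ⟨h1, fun i hi => ?_⟩
            by_cases hiN : i < N
            · rw [hz2 ⟨i, hiN⟩, hw2 ⟨i, hiN⟩]
            · push_neg at hiN
              rw [← hz3 i hiN, ← hw3 i hiN]
              exact h1 i hi
        _ ≤ (K : ℝ≥0∞) ^ N * eK ^ n := by
            rw [Finset.sum_const, nsmul_eq_mul]
            rw [Finset.card_univ, Fintype.card_prod, Fintype.card_fun, Fintype.card_fun,
              Fintype.card_fin, Fintype.card_fin, Fintype.card_fin]
            rw [rpow_two_eq]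
            push_cast
            rw [show ((K : ℝ≥0∞) ^ n * (K : ℝ≥0∞) ^ N) * (eK ^ n * eK ^ n)
                = ((K : ℝ≥0∞) ^ n * eK ^ n) * ((K : ℝ≥0∞) ^ N * eK ^ n) by ring]
            rw [heK, K_pow_mul_inv_pow hK0, one_mul]
  have hlim : Filter.Tendsto (fun n : ℕ => (K : ℝ≥0∞) ^ N * eK ^ n) atTop (𝓝 0) := by
    have := ENNReal.Tendsto.const_mul (a := (K : ℝ≥0∞) ^ N) (eK_pow_tendsto hK)
      (Or.inr (ENNReal.pow_ne_top (ENNReal.natCast_ne_top K)))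
    simpa using this
  calc Filter.liminf _ atTop ≤ Filter.liminf (fun n : ℕ => (K : ℝ≥0∞) ^ N * eK ^ n) atTop := by
        refine Filter.liminf_le_liminf ?_
        filter_upwards [Filter.eventually_ge_atTop N] with n hn
        exact hbound n hn
    _ = 0 := hlim.liminf_eq

/-- Pairs such that every window of length `L` starting at `s ≥ N` contains a disagreement. -/
def BSet (K L N : ℕ) : Set (SymbSp K × SymbSp K) :=
  {z | ∀ s, N ≤ s → ∃ i, s ≤ i ∧ i < s + L ∧ z.1 i ≠ z.2 i}

/-- Pairs of distinct words of length `L`. -/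
def TSet (K L : ℕ) := {p : (Fin L → Fin K) × (Fin L → Fin K) // p.1 ≠ p.2}

instance (K L : ℕ) : Fintype (TSet K L) := by unfold TSet; infer_instance

lemma card_TSet_lt (hK0 : 0 < K) (L : ℕ) :
    Fintype.card (TSet K L) < K ^ L * K ^ L := by
  classical
  have h1 : Fintype.card {p : (Fin L → Fin K) × (Fin L → Fin K) // p.1 = p.2} = K ^ L := by
    have e : {p : (Fin L → Fin K) × (Fin L → Fin K) // p.1 = p.2} ≃ (Fin L → Fin K) :=
      { toFun := fun q => q.1.1
        invFun := fun u => ⟨(u, u), rfl⟩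
        left_inv := fun q => by
          rcases q with ⟨⟨a, b⟩, h⟩
          simp only at h
          subst h
          rfl
        right_inv := fun u => rfl }
    rw [Fintype.card_congr e, Fintype.card_fun, Fintype.card_fin, Fintype.card_fin]
  have h2 : Fintype.card (TSet K L)
      = Fintype.card ((Fin L → Fin K) × (Fin L → Fin K))
        - Fintype.card {p : (Fin L → Fin K) × (Fin L → Fin K) // p.1 = p.2} :=
    Fintype.card_subtype_compl _
  rw [h2, h1, Fintype.card_prod, Fintype.card_fun, Fintype.card_fin, Fintype.card_fin]
  have h3 : 0 < K ^ L := Nat.pow_pos hK0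
  have h4 : K ^ L ≤ K ^ L * K ^ L := Nat.le_mul_of_pos_left _ h3
  omega

lemma idx_lt {N L m j l : ℕ} (hj : j < m) (hl : l < L) : N + j * L + l < N + m * L := by
  have h1 : (j + 1) * L ≤ m * L := Nat.mul_le_mul_right L hj
  have h2 : (j + 1) * L = j * L + L := by ring
  omega

/-- Index set for covering `BSet`: pairs of words of length `N + m * L` with a disagreement
in each of the `m` blocks of length `L` after position `N`. -/
def BIdx (K N L m : ℕ) := {w : Fin (N + m * L) → Fin K × Fin K //
  ∀ j < m, ∃ i : Fin (N + m * L),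
    ((N + j * L ≤ (i : ℕ) ∧ (i : ℕ) < N + j * L + L) ∧ (w i).1 ≠ (w i).2)}

noncomputable instance (K N L m : ℕ) : Fintype (BIdx K N L m) := by
  classical
  unfold BIdx
  infer_instance

lemma blocks_ne {K N L m : ℕ} (w : BIdx K N L m) (j : Fin m) :
    (fun l : Fin L => (w.1 ⟨N + (j : ℕ) * L + (l : ℕ), idx_lt j.isLt l.isLt⟩).1)
      ≠ (fun l : Fin L => (w.1 ⟨N + (j : ℕ) * L + (l : ℕ), idx_lt j.isLt l.isLt⟩).2) := by
  obtain ⟨i, ⟨hi1, hi2⟩, hne⟩ := w.2 j j.isLt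
  intro hEq
  have hl : (i : ℕ) - (N + (j : ℕ) * L) < L := by omega
  have hidx : (⟨N + (j : ℕ) * L + ((i : ℕ) - (N + (j : ℕ) * L)),
      idx_lt j.isLt hl⟩ : Fin (N + m * L)) = i := Fin.ext (by simp only; omega)
  have hc := congrFun hEq ⟨(i : ℕ) - (N + (j : ℕ) * L), hl⟩
  simp only at hc
  rw [hidx] at hc
  exact hne hc

lemma card_BIdx_le {K : ℕ} (N L m : ℕ) (hL : 0 < L) :
    Fintype.card (BIdx K N L m) ≤ (K * K) ^ N * (Fintype.card (TSet K L)) ^ m := by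
  classical
  have hNM : N ≤ N + m * L := Nat.le_add_right _ _
  set Φ : BIdx K N L m → (Fin N → Fin K × Fin K) × (Fin m → TSet K L) := fun w =>
    (fun i => w.1 (Fin.castLE hNM i),
     fun j => ⟨(fun l => (w.1 ⟨N + (j : ℕ) * L + (l : ℕ), idx_lt j.isLt l.isLt⟩).1,
                fun l => (w.1 ⟨N + (j : ℕ) * L + (l : ℕ), idx_lt j.isLt l.isLt⟩).2),
               blocks_ne w j⟩) with hΦ
  have hinj : Function.Injective Φ := by
    intro w w' h
    obtain ⟨h1, h2⟩ := Prod.ext_iff.mp h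
    apply Subtype.ext
    funext i
    by_cases hiN : (i : ℕ) < N
    · have hidx : Fin.castLE hNM ⟨(i : ℕ), hiN⟩ = i := Fin.ext rfl
      have := congrFun h1 ⟨(i : ℕ), hiN⟩
      simp only [hΦ] at this
      rwa [hidx] at this
    · push_neg at hiN
      have hj : ((i : ℕ) - N) / L < m := by
        rw [Nat.div_lt_iff_lt_mul hL]
        have := i.isLt
        omega
      have hl : ((i : ℕ) - N) % L < L := Nat.mod_lt _ hL
      have hidx : (⟨N + (((i : ℕ) - N) / L) * L + ((i : ℕ) - N) % L,
          idx_lt hj hl⟩ : Fin (N + m * L)) = i := by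
        apply Fin.ext
        simp only
        have hdm := Nat.div_add_mod ((i : ℕ) - N) L
        have hcomm : (((i : ℕ) - N) / L) * L = L * (((i : ℕ) - N) / L) := Nat.mul_comm _ _
        omega
      have h2j := congrFun h2 ⟨((i : ℕ) - N) / L, hj⟩
      replace h2j := congrArg Subtype.val h2j
      simp only [hΦ] at h2j
      obtain ⟨h2a, h2b⟩ := Prod.ext_iff.mp h2j
      have e1 := congrFun h2a ⟨((i : ℕ) - N) % L, hl⟩
      have e2 := congrFun h2b ⟨((i : ℕ) - N) % L, hl⟩
      simp only at e1 e2
      rw [hidx] at e1 e2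
      exact Prod.ext e1 e2
  calc Fintype.card (BIdx K N L m)
      ≤ Fintype.card ((Fin N → Fin K × Fin K) × (Fin m → TSet K L)) :=
        Fintype.card_le_of_injective Φ hinj
    _ = (K * K) ^ N * (Fintype.card (TSet K L)) ^ m := by
        simp [Fintype.card_fun]

lemma hm_BSet (hK : 2 ≤ K) {L : ℕ} (hL : 0 < L) (N : ℕ) : μH[2] (BSet K L N) = 0 := by
  have hK0 : 0 < K := by omega
  set eK : ℝ≥0∞ := ((K : ℝ≥0∞))⁻¹ with heK
  have heK0 : eK ≠ 0 := ENNReal.inv_ne_zero.mpr (ENNReal.natCast_ne_top K)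
  have heKtop : eK ≠ ⊤ := ENNReal.inv_ne_top.mpr (by exact_mod_cast hK0.ne')
  have hrt : Filter.Tendsto (fun m : ℕ => eK ^ (N + m * L)) atTop (𝓝 0) := by
    refine (eK_pow_tendsto hK).comp ?_
    refine Filter.tendsto_atTop_mono (fun m => ?_) Filter.tendsto_id
    have : m * 1 ≤ m * L := Nat.mul_le_mul_left m hL
    simp only [id_eq]
    omega
  have hle := MeasureTheory.Measure.hausdorffMeasure_le_liminf_sum (d := 2)
    (s := BSet K L N) (l := atTop)
    (fun m : ℕ => eK ^ (N + m * L)) hrt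
    (fun m (w : BIdx K N L m) =>
      {z | ∀ i : Fin (N + m * L), z.1 (i : ℕ) = (w.1 i).1 ∧ z.2 (i : ℕ) = (w.1 i).2})
    (by
      refine Filter.Eventually.of_forall fun m => fun w => ?_
      refine diam_le_of_agree hK0 fun z hz w' hw' => ?_
      constructor
      · intro i hi
        rw [(hz ⟨i, hi⟩).1, (hw' ⟨i, hi⟩).1]
      · intro i hi
        rw [(hz ⟨i, hi⟩).2, (hw' ⟨i, hi⟩).2])
    (by
      refine Filter.Eventually.of_forall fun m => fun z hz => ?_
      have hw : ∀ j < m, ∃ i : Fin (N + m * L),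
          ((N + j * L ≤ (i : ℕ) ∧ (i : ℕ) < N + j * L + L) ∧
            ((fun i : Fin (N + m * L) => (z.1 (i : ℕ), z.2 (i : ℕ))) i).1
              ≠ ((fun i : Fin (N + m * L) => (z.1 (i : ℕ), z.2 (i : ℕ))) i).2) := by
        intro j hj
        obtain ⟨i, hi1, hi2, hne⟩ := hz (N + j * L) (Nat.le_add_right _ _)
        have hjL : (j + 1) * L ≤ m * L := Nat.mul_le_mul_right L hj
        have hjL' : (j + 1) * L = j * L + L := by ring
        have hiM : i < N + m * L := by omega
        exact ⟨⟨i, hiM⟩, ⟨hi1, hi2⟩, hne⟩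
      refine Set.mem_iUnion.mpr ⟨⟨fun i => (z.1 (i : ℕ), z.2 (i : ℕ)), hw⟩, ?_⟩
      exact fun i => ⟨rfl, rfl⟩)
  refine le_antisymm (hle.trans ?_) zero_le
  set c : ℝ≥0∞ := (Fintype.card (TSet K L) : ℝ≥0∞) * (eK ^ L * eK ^ L) with hc
  have hc1 : c < 1 := by
    have hlt : (Fintype.card (TSet K L) : ℝ≥0∞) < ((K : ℝ≥0∞) ^ L * (K : ℝ≥0∞) ^ L) := by
      have := card_TSet_lt hK0 L
      calc (Fintype.card (TSet K L) : ℝ≥0∞) < ((K ^ L * K ^ L : ℕ) : ℝ≥0∞) := by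
            exact_mod_cast this
        _ = (K : ℝ≥0∞) ^ L * (K : ℝ≥0∞) ^ L := by push_cast; ring
    have hmul : (Fintype.card (TSet K L) : ℝ≥0∞) * (eK ^ L * eK ^ L)
        < ((K : ℝ≥0∞) ^ L * (K : ℝ≥0∞) ^ L) * (eK ^ L * eK ^ L) := by
      refine ENNReal.mul_lt_mul_left ?_ ?_ hlt
      · exact mul_ne_zero (pow_ne_zero _ heK0) (pow_ne_zero _ heK0)
      · exact ENNReal.mul_ne_top (ENNReal.pow_ne_top heKtop) (ENNReal.pow_ne_top heKtop)
    have hone : ((K : ℝ≥0∞) ^ L * (K : ℝ≥0∞) ^ L) * (eK ^ L * eK ^ L) = 1 := by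
      rw [show ((K : ℝ≥0∞) ^ L * (K : ℝ≥0∞) ^ L) * (eK ^ L * eK ^ L)
          = ((K : ℝ≥0∞) ^ L * eK ^ L) * ((K : ℝ≥0∞) ^ L * eK ^ L) by ring]
      rw [heK, K_pow_mul_inv_pow hK0, one_mul]
    rw [hc]
    calc (Fintype.card (TSet K L) : ℝ≥0∞) * (eK ^ L * eK ^ L)
        < ((K : ℝ≥0∞) ^ L * (K : ℝ≥0∞) ^ L) * (eK ^ L * eK ^ L) := hmul
      _ = 1 := hone
  have hbound : ∀ m : ℕ,
      (∑ w : BIdx K N L m,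
        EMetric.diam {z : SymbSp K × SymbSp K |
          ∀ i : Fin (N + m * L), z.1 (i : ℕ) = (w.1 i).1 ∧ z.2 (i : ℕ) = (w.1 i).2} ^ (2 : ℝ))
      ≤ c ^ m := by
    intro m
    calc _ ≤ ∑ _w : BIdx K N L m, (eK ^ (N + m * L)) ^ (2 : ℝ) := by
          refine Finset.sum_le_sum fun w _ => ?_
          refine ENNReal.rpow_le_rpow ?_ (by norm_num)
          refine diam_le_of_agree hK0 fun z hz w' hw' => ?_
          constructor
          · intro i hi
            rw [(hz ⟨i, hi⟩).1, (hw' ⟨i, hi⟩).1]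
          · intro i hi
            rw [(hz ⟨i, hi⟩).2, (hw' ⟨i, hi⟩).2]
      _ ≤ ((K * K) ^ N * (Fintype.card (TSet K L)) ^ m : ℕ) * (eK ^ (N + m * L)) ^ (2 : ℝ) := by
          rw [Finset.sum_const, nsmul_eq_mul, Finset.card_univ]
          refine mul_le_mul_left ?_ _
          exact_mod_cast card_BIdx_le N L m hL
      _ = c ^ m := by
          rw [rpow_two_eq]
          push_cast
          rw [hc, heK]
          have hab : (K : ℝ≥0∞) * (K : ℝ≥0∞)⁻¹ = 1 :=
            ENNReal.mul_inv_cancel (by exact_mod_cast hK0.ne') (ENNReal.natCast_ne_top K)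
          have h1 : ((K : ℝ≥0∞) * (K : ℝ≥0∞)⁻¹) ^ N = 1 := by rw [hab, one_pow]
          calc ((K : ℝ≥0∞) * K) ^ N * (Fintype.card (TSet K L) : ℝ≥0∞) ^ m *
                ((K : ℝ≥0∞)⁻¹ ^ (N + m * L) * (K : ℝ≥0∞)⁻¹ ^ (N + m * L))
              = ((K : ℝ≥0∞) * (K : ℝ≥0∞)⁻¹) ^ N * ((K : ℝ≥0∞) * (K : ℝ≥0∞)⁻¹) ^ N *
                ((Fintype.card (TSet K L) : ℝ≥0∞) *
                  ((K : ℝ≥0∞)⁻¹ ^ L * (K : ℝ≥0∞)⁻¹ ^ L)) ^ m := by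
                rw [mul_pow, mul_pow, mul_pow]
                rw [pow_add, mul_comm m L, pow_mul]
                ring
            _ = ((Fintype.card (TSet K L) : ℝ≥0∞) *
                  ((K : ℝ≥0∞)⁻¹ ^ L * (K : ℝ≥0∞)⁻¹ ^ L)) ^ m := by
                rw [h1, one_mul, one_mul]
  have hlim : Filter.Tendsto (fun m : ℕ => c ^ m) atTop (𝓝 0) :=
    ENNReal.tendsto_pow_atTop_nhds_zero_of_lt_one hc1
  calc Filter.liminf _ atTop ≤ Filter.liminf (fun m : ℕ => c ^ m) atTop :=
        Filter.liminf_le_liminf (Filter.Eventually.of_forall hbound)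
    _ = 0 := hlim.liminf_eq

lemma compl_LY_subset (hK : 2 ≤ K) :
    (LYset K)ᶜ ⊆ (⋃ N, ASet K N) ∪ ⋃ L, ⋃ N, BSet K (L + 1) N := by
  intro z hz
  by_contra hmem
  rw [Set.mem_union] at hmem
  push_neg at hmem
  obtain ⟨hA, hB⟩ := hmem
  simp only [Set.mem_iUnion, not_exists] at hA hB
  apply hz
  set f : ℕ → ℝ := fun i => dist ((shift K)^[i] z.1) ((shift K)^[i] z.2) with hf
  have hub : ∀ i, f i ≤ 1 := fun i => sdist_le_one _ _
  have hlb : ∀ i, 0 ≤ f i := fun i => dist_nonneg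
  have hBa : Filter.IsBoundedUnder (· ≤ ·) atTop f :=
    Filter.isBoundedUnder_of ⟨1, hub⟩
  have hBb : Filter.IsBoundedUnder (· ≥ ·) atTop f :=
    Filter.isBoundedUnder_of ⟨0, hlb⟩
  have hAq : ∀ N, ∃ i, N ≤ i ∧ z.1 i ≠ z.2 i := by
    intro N
    have := hA N
    rw [ASet, Set.mem_setOf_eq] at this
    push_neg at this
    obtain ⟨i, hi1, hi2⟩ := this
    exact ⟨i, hi1, hi2⟩
  have hBq : ∀ L N : ℕ, ∃ s, N ≤ s ∧ ∀ i, s ≤ i → i < s + (L + 1) → z.1 i = z.2 i := by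
    intro L N
    have := hB L N
    rw [BSet, Set.mem_setOf_eq] at this
    push_neg at this
    obtain ⟨s, hs1, hs2⟩ := this
    exact ⟨s, hs1, hs2⟩
  constructor
  · -- liminf = 0
    refine le_antisymm ?_ ?_
    · have hL : ∀ L : ℕ, Filter.liminf f atTop ≤ ((K : ℝ))⁻¹ ^ L := by
        intro L
        refine Filter.liminf_le_of_frequently_le ?_ hBb
        rw [Filter.frequently_atTop]
        intro N
        obtain ⟨s, hs1, hs2⟩ := hBq L N
        refine ⟨s, hs1, ?_⟩
        refine dist_shift_le fun j hj => ?_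
        exact hs2 (j + s) (Nat.le_add_left _ _) (by omega)
      have hq : Filter.Tendsto (fun L : ℕ => ((K : ℝ))⁻¹ ^ L) atTop (𝓝 0) := by
        refine tendsto_pow_atTop_nhds_zero_of_lt_one (by positivity) ?_
        rw [inv_lt_one_iff₀]
        right
        exact_mod_cast Nat.lt_of_lt_of_le one_lt_two hK
      exact ge_of_tendsto hq (Filter.Eventually.of_forall hL)
    · exact Filter.le_liminf_of_le (hBa.isCoboundedUnder_ge)
        (Filter.Eventually.of_forall hlb)
  · -- limsup > 0
    have hfreq : ∃ᶠ i in atTop, (1 : ℝ) ≤ f i := by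
      rw [Filter.frequently_atTop]
      intro N
      obtain ⟨i, hiN, hne⟩ := hAq N
      exact ⟨i, hiN, (dist_shift_eq_one hne).ge⟩
    have := Filter.le_limsup_of_frequently_le hfreq hBa
    linarith

lemma hm_compl_LY (hK : 2 ≤ K) : μH[2] ((LYset K)ᶜ) = 0 := by
  refine measure_mono_null (compl_LY_subset hK) ?_
  refine measure_union_null (measure_iUnion_null fun N => hm_ASet hK N) ?_
  exact measure_iUnion_null fun L => measure_iUnion_null fun N =>
    hm_BSet hK (Nat.succ_pos L) N

/-- The base-`K` evaluation map `Σ_K → ℝ`. -/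
noncomputable def gmap (K : ℕ) (x : SymbSp K) : ℝ := ∑' i, (x i : ℝ) * ((K : ℝ))⁻¹ ^ (i + 1)

lemma gmap_summable (hK : 2 ≤ K) (x : SymbSp K) :
    Summable (fun i => (x i : ℝ) * ((K : ℝ))⁻¹ ^ (i + 1)) := by
  have hq0 : (0 : ℝ) ≤ (K : ℝ)⁻¹ := by positivity
  have hq1 : (K : ℝ)⁻¹ < 1 := by
    rw [inv_lt_one_iff₀]; right; exact_mod_cast Nat.lt_of_lt_of_le one_lt_two hK
  refine Summable.of_nonneg_of_le (fun i => by positivity)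
    (fun i => ?_) (((summable_geometric_of_lt_one hq0 hq1).mul_left ((K : ℝ) * (K : ℝ)⁻¹)))
  have hxi : ((x i : ℕ) : ℝ) ≤ (K : ℝ) := by
    exact_mod_cast (x i).isLt.le
  calc (x i : ℝ) * (K : ℝ)⁻¹ ^ (i + 1) ≤ (K : ℝ) * (K : ℝ)⁻¹ ^ (i + 1) := by
        refine mul_le_mul_of_nonneg_right hxi (by positivity)
    _ = (K : ℝ) * (K : ℝ)⁻¹ * (K : ℝ)⁻¹ ^ i := by ring
  
open Classical in
lemma gmap_lipschitz (hK : 2 ≤ K) : LipschitzWith 1 (gmap K) := by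
  have hK2 : (2 : ℝ) ≤ (K : ℝ) := by exact_mod_cast hK
  have hK0 : (0 : ℝ) < (K : ℝ) := by linarith
  have hq0 : (0 : ℝ) ≤ (K : ℝ)⁻¹ := by positivity
  have hq1 : (K : ℝ)⁻¹ < 1 := by
    rw [inv_lt_one_iff₀]; right; linarith
  refine LipschitzWith.of_dist_le_mul fun x y => ?_
  rw [NNReal.coe_one, one_mul]
  by_cases hxy : x = y
  · simp [hxy]
  set n := Nat.find (SymbSp.exists_ne hxy) with hn
  have hdist : dist x y = ((K : ℝ))⁻¹ ^ n := sdist_eq hxy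
  rw [hdist, Real.dist_eq]
  have hsx := gmap_summable hK x
  have hsy := gmap_summable hK y
  set d : ℕ → ℝ := fun i => ((x i : ℝ) - (y i : ℝ)) * ((K : ℝ))⁻¹ ^ (i + 1) with hddef
  have hsd : Summable d := by
    have := hsx.sub hsy
    refine this.congr fun i => ?_
    rw [hddef]; ring
  have hsub : gmap K x - gmap K y = ∑' i, d i := by
    rw [gmap, gmap, ← Summable.tsum_sub hsx hsy]
    congr 1
    funext i
    rw [hddef]
    ring
  set c : ℕ → ℝ := fun i => if i < n then 0 else ((K : ℝ) - 1) * ((K : ℝ))⁻¹ ^ (i + 1)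
    with hcdef
  have hcle : ∀ i, c i ≤ ((K : ℝ) - 1) * ((K : ℝ))⁻¹ ^ (i + 1) := by
    intro i
    rw [hcdef]
    dsimp only
    split
    · have : (0:ℝ) ≤ ((K : ℝ) - 1) * ((K : ℝ))⁻¹ ^ (i + 1) :=
        mul_nonneg (by linarith) (by positivity)
      linarith
    · exact le_rfl
  have hc0 : ∀ i, 0 ≤ c i := by
    intro i
    rw [hcdef]
    dsimp only
    split
    · exact le_rfl
    · exact mul_nonneg (by linarith) (by positivity)
  have hgeo : Summable (fun i : ℕ => ((K : ℝ) - 1) * ((K : ℝ))⁻¹ ^ (i + 1)) := by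
    refine ((summable_geometric_of_lt_one hq0 hq1).mul_left (((K : ℝ) - 1) * (K : ℝ)⁻¹)).congr
      fun i => ?_
    ring
  have hcsum : Summable c := Summable.of_nonneg_of_le hc0 hcle hgeo
  have hdc : ∀ i, |d i| ≤ c i := by
    intro i
    rw [hddef, hcdef]
    dsimp only
    split
    · rename_i hi
      rw [SymbSp.eq_of_lt_find hxy (hn ▸ hi)]
      simp
    · rw [abs_mul, abs_of_nonneg (by positivity : (0:ℝ) ≤ ((K : ℝ))⁻¹ ^ (i + 1))]
      refine mul_le_mul_of_nonneg_right ?_ (by positivity)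
      have hx1 : ((x i : ℕ) : ℝ) + 1 ≤ (K : ℝ) := by exact_mod_cast (x i).isLt
      have hy1 : ((y i : ℕ) : ℝ) + 1 ≤ (K : ℝ) := by exact_mod_cast (y i).isLt
      have hx0 : (0 : ℝ) ≤ ((x i : ℕ) : ℝ) := by positivity
      have hy0 : (0 : ℝ) ≤ ((y i : ℕ) : ℝ) := by positivity
      rw [abs_le]
      constructor <;> linarith
  have habs : |gmap K x - gmap K y| ≤ ∑' i, c i := by
    rw [hsub]
    calc |∑' i, d i| ≤ ∑' i, |d i| := by
          have : ‖∑' i, d i‖ ≤ ∑' i, ‖d i‖ := norm_tsum_le_tsum_norm (by simpa using hsd.abs)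
          simpa using this
      _ ≤ ∑' i, c i := Summable.tsum_le_tsum hdc hsd.abs hcsum
  refine habs.trans ?_
  have hsplit : (∑ i ∈ Finset.range n, c i) + ∑' i, c (i + n) = ∑' i, c i :=
    Summable.sum_add_tsum_nat_add n hcsum
  have hzero : (∑ i ∈ Finset.range n, c i) = 0 := by
    refine Finset.sum_eq_zero fun i hi => ?_
    rw [hcdef]
    exact if_pos (Finset.mem_range.mp hi)
  have htail : ∑' i, c (i + n) = ((K : ℝ) - 1) * ((K : ℝ))⁻¹ ^ (n + 1) * (1 - (K : ℝ)⁻¹)⁻¹ := by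
    have h1 : ∀ i : ℕ, c (i + n) = ((K : ℝ) - 1) * ((K : ℝ))⁻¹ ^ (n + 1) * ((K : ℝ))⁻¹ ^ i := by
      intro i
      rw [hcdef]
      dsimp only
      rw [if_neg (by omega)]
      rw [show i + n + 1 = (n + 1) + i by omega, pow_add]
      ring
    rw [tsum_congr h1, tsum_mul_left, tsum_geometric_of_lt_one hq0 hq1]
  have hfinal : ((K : ℝ) - 1) * ((K : ℝ))⁻¹ ^ (n + 1) * (1 - (K : ℝ)⁻¹)⁻¹
      = ((K : ℝ))⁻¹ ^ n := by
    have hKne : (K : ℝ) ≠ 0 := by linarith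
    have hKm1 : (K : ℝ) - 1 ≠ 0 := by linarith
    have h1q : 1 - (K : ℝ)⁻¹ = ((K : ℝ) - 1) / (K : ℝ) := by field_simp
    rw [h1q, pow_succ]
    field_simp
  rw [← hsplit, hzero, zero_add, htail, hfinal]

/-- Remainders of the greedy base-`K` expansion. -/
noncomputable def rem (K : ℕ) (t : ℝ) : ℕ → ℝ
  | 0 => t
  | m + 1 => Int.fract ((K : ℝ) * rem K t m)

lemma gmap_surj (hK : 2 ≤ K) {t : ℝ} (ht : t ∈ Set.Ico (0 : ℝ) 1) :
    ∃ x : SymbSp K, gmap K x = t := by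
  have hK2 : (2 : ℝ) ≤ (K : ℝ) := by exact_mod_cast hK
  have hK0 : (0 : ℝ) < (K : ℝ) := by linarith
  have hq0 : (0 : ℝ) ≤ (K : ℝ)⁻¹ := by positivity
  have hq1 : (K : ℝ)⁻¹ < 1 := by rw [inv_lt_one_iff₀]; right; linarith
  have hrem : ∀ m, rem K t m ∈ Set.Ico (0 : ℝ) 1 := by
    intro m
    induction m with
    | zero => exact ht
    | succ p ih => exact ⟨Int.fract_nonneg _, Int.fract_lt_one _⟩
  have hfl0 : ∀ m, 0 ≤ ⌊(K : ℝ) * rem K t m⌋ := fun m =>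
    Int.floor_nonneg.mpr (mul_nonneg hK0.le (hrem m).1)
  have hflK : ∀ m, ⌊(K : ℝ) * rem K t m⌋ < (K : ℤ) := by
    intro m
    rw [Int.floor_lt]
    push_cast
    calc (K : ℝ) * rem K t m < (K : ℝ) * 1 := by
          exact mul_lt_mul_of_pos_left (hrem m).2 hK0
      _ = (K : ℝ) := mul_one _
  set x : SymbSp K := fun m => ⟨(⌊(K : ℝ) * rem K t m⌋).toNat, by
    have h1 := hflK m
    have h2 := hfl0 m
    omega⟩ with hx
  have hxval : ∀ m, ((x m : ℕ) : ℝ) = ⌊(K : ℝ) * rem K t m⌋ := by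
    intro m
    rw [hx]
    simp only
    exact_mod_cast Int.toNat_of_nonneg (hfl0 m)
  have hstep : ∀ m, rem K t m = ((x m : ℕ) : ℝ) * ((K : ℝ))⁻¹
      + rem K t (m + 1) * ((K : ℝ))⁻¹ := by
    intro m
    have hfr : rem K t (m + 1) = Int.fract ((K : ℝ) * rem K t m) := rfl
    rw [hxval m, hfr, Int.fract]
    field_simp
    ring
  have hpartial : ∀ m, t = (∑ i ∈ Finset.range m, ((x i : ℕ) : ℝ) * ((K : ℝ))⁻¹ ^ (i + 1))
      + rem K t m * ((K : ℝ))⁻¹ ^ m := by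
    intro m
    induction m with
    | zero => simp [rem]
    | succ p ih =>
      rw [Finset.sum_range_succ]
      have h2 : rem K t p * ((K : ℝ))⁻¹ ^ p
          = ((x p : ℕ) : ℝ) * ((K : ℝ))⁻¹ ^ (p + 1) + rem K t (p + 1) * ((K : ℝ))⁻¹ ^ (p + 1) := by
        rw [hstep p]
        ring
      linarith [h2, ih]
  have hsum : HasSum (fun i => ((x i : ℕ) : ℝ) * ((K : ℝ))⁻¹ ^ (i + 1)) t := by
    rw [hasSum_iff_tendsto_nat_of_nonneg (fun i => by positivity)]
    have heq : ∀ m, (∑ i ∈ Finset.range m, ((x i : ℕ) : ℝ) * ((K : ℝ))⁻¹ ^ (i + 1))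
        = t - rem K t m * ((K : ℝ))⁻¹ ^ m := by
      intro m
      have := hpartial m
      linarith
    have hten : Filter.Tendsto (fun m : ℕ => rem K t m * ((K : ℝ))⁻¹ ^ m) atTop (𝓝 0) := by
      refine squeeze_zero (fun m => mul_nonneg (hrem m).1 (by positivity)) (fun m => ?_)
        (tendsto_pow_atTop_nhds_zero_of_lt_one hq0 hq1)
      calc rem K t m * ((K : ℝ))⁻¹ ^ m ≤ 1 * ((K : ℝ))⁻¹ ^ m :=
            mul_le_mul_of_nonneg_right (hrem m).2.le (by positivity)
        _ = ((K : ℝ))⁻¹ ^ m := one_mul _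
    have := (tendsto_const_nhds (x := t) (f := (atTop : Filter ℕ))).sub hten
    rw [sub_zero] at this
    refine this.congr fun m => (heq m).symm
  exact ⟨x, hsum.tsum_eq⟩

/-- The pair evaluation map into `Fin 2 → ℝ` (with the sup metric). -/
noncomputable def Gm (K : ℕ) : SymbSp K × SymbSp K → (Fin 2 → ℝ) :=
  fun z i => if (i : ℕ) = 0 then gmap K z.1 else gmap K z.2

lemma Gm_lipschitz (hK : 2 ≤ K) : LipschitzWith 1 (Gm K) := by
  refine LipschitzWith.of_dist_le_mul fun z w => ?_
  rw [NNReal.coe_one, one_mul]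
  rw [dist_pi_le_iff dist_nonneg]
  intro i
  have h1 : dist (gmap K z.1) (gmap K w.1) ≤ dist z w := by
    have := (gmap_lipschitz hK).dist_le_mul z.1 w.1
    rw [NNReal.coe_one, one_mul] at this
    refine this.trans ?_
    rw [Prod.dist_eq]
    exact le_max_left _ _
  have h2 : dist (gmap K z.2) (gmap K w.2) ≤ dist z w := by
    have := (gmap_lipschitz hK).dist_le_mul z.2 w.2
    rw [NNReal.coe_one, one_mul] at this
    refine this.trans ?_
    rw [Prod.dist_eq]
    exact le_max_right _ _
  by_cases h : (i : ℕ) = 0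
  · simpa [Gm, h] using h1
  · simpa [Gm, h] using h2

lemma pi_Ico_subset_range (hK : 2 ≤ K) :
    (Set.univ.pi fun _ : Fin 2 => Set.Ico (0 : ℝ) 1) ⊆ Set.range (Gm K) := by
  intro f hf
  rw [Set.mem_pi] at hf
  obtain ⟨a, ha⟩ := gmap_surj hK (hf 0 trivial)
  obtain ⟨b, hb⟩ := gmap_surj hK (hf 1 trivial)
  refine ⟨(a, b), funext fun i => ?_⟩
  by_cases h : (i : ℕ) = 0
  · have hi : i = 0 := Fin.ext h
    simp [Gm, h, ha, hi]
  · have hi : i = 1 := by omega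
    simp [Gm, h, hb, hi]

lemma hm_pi_eq : (μH[2] : Measure (Fin 2 → ℝ)) = volume := by
  have h := MeasureTheory.hausdorffMeasure_pi_real (ι := Fin 2)
  have h2 : ((Fintype.card (Fin 2) : ℝ)) = 2 := by simp
  rwa [h2] at h

lemma vol_pi_Ico : volume (Set.univ.pi fun _ : Fin 2 => Set.Ico (0 : ℝ) 1) = 1 := by
  rw [volume_pi_pi]
  simp [Real.volume_Ico]

lemma hm_LY (hK : 2 ≤ K) : μH[2] (LYset K) = 1 := by
  refine le_antisymm ((measure_mono (Set.subset_univ _)).trans (hm_univ_le hK)) ?_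
  have himg : (Set.univ.pi fun _ : Fin 2 => Set.Ico (0 : ℝ) 1)
      ⊆ Gm K '' (LYset K) ∪ Gm K '' ((LYset K)ᶜ) := by
    intro f hf
    obtain ⟨z, hz⟩ := pi_Ico_subset_range hK hf
    by_cases hzLY : z ∈ LYset K
    · exact Or.inl ⟨z, hzLY, hz⟩
    · exact Or.inr ⟨z, hzLY, hz⟩
  have himage_le : ∀ s : Set (SymbSp K × SymbSp K), μH[2] (Gm K '' s) ≤ μH[2] s := by
    intro s
    have := (Gm_lipschitz hK).hausdorffMeasure_image_le (by norm_num : (0:ℝ) ≤ 2) s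
    simpa using this
  calc (1 : ℝ≥0∞) = volume (Set.univ.pi fun _ : Fin 2 => Set.Ico (0 : ℝ) 1) := vol_pi_Ico.symm
    _ = μH[2] (Set.univ.pi fun _ : Fin 2 => Set.Ico (0 : ℝ) 1) := by rw [hm_pi_eq]
    _ ≤ μH[2] (Gm K '' (LYset K) ∪ Gm K '' ((LYset K)ᶜ)) := measure_mono himg
    _ ≤ μH[2] (Gm K '' (LYset K)) + μH[2] (Gm K '' ((LYset K)ᶜ)) := measure_union_le _ _
    _ ≤ μH[2] (LYset K) + μH[2] ((LYset K)ᶜ) := add_le_add (himage_le _) (himage_le _)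
    _ = μH[2] (LYset K) := by rw [hm_compl_LY hK, add_zero]

end Aux

/-- For `K ≥ 2`, the set of Li–Yorke pairs of `σ_K` has Hausdorff
dimension `2` and its `2`-dimensional Hausdorff measure equals `1`. -/
theorem statement_2 (K : ℕ) (hK : 2 ≤ K) :
    dimH (LYset K) = 2 ∧ μH[2] (LYset K) = 1 := by
  have hm := hm_LY hK
  refine ⟨?_, hm⟩
  have hcast : (((2 : NNReal) : ℝ)) = (2 : ℝ) := by norm_num
  have hm' : μH[((2 : NNReal) : ℝ)] (LYset K) = 1 := by rw [hcast]; exact hm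
  refine le_antisymm ?_ ?_
  · have := dimH_le_of_hausdorffMeasure_ne_top (s := LYset K) (d := (2 : NNReal))
      (by rw [hm']; exact ENNReal.one_ne_top)
    simpa using this
  · have := le_dimH_of_hausdorffMeasure_ne_zero (s := LYset K) (d := (2 : NNReal))
      (by rw [hm']; exact one_ne_zero)
    simpa using this
end

section
/- Let (X,ρ) be a compact metric space, f : X → X a continuous surjection, n ≥ 1 an integer, and [p,q] a compact subinterval of [0,1]. Then E_{f^n}([p,q]) = E_f([p,q]) and D_{f^n}([p,q]) = D_f([p,q]). -/
noncomputable section DistChaos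

variable {X : Type*} [MetricSpace X]

/-- The lower distributional function `F_{x,y}(ε)`. -/
def lowF (f : X → X) (x y : X) (ε : ℝ) : ℝ :=
  Filter.liminf (fun n : ℕ =>
    (((Finset.range n).filter fun i => dist (f^[i] x) (f^[i] y) < ε).card : ℝ) / n)
    Filter.atTop

/-- The upper distributional function `F*_{x,y}(ε)`. -/
def uppF (f : X → X) (x y : X) (ε : ℝ) : ℝ :=
  Filter.limsup (fun n : ℕ =>
    (((Finset.range n).filter fun i => dist (f^[i] x) (f^[i] y) < ε).card : ℝ) / n)
    Filter.atTop

/-- The set `E_f([p,q])`. -/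
def Eset (f : X → X) (p q : ℝ) : Set (X × X) :=
  {z | Filter.Tendsto (fun ε => lowF f z.1 z.2 ε) (nhdsWithin 0 (Set.Ioi 0)) (nhds p) ∧
       Filter.Tendsto (fun ε => uppF f z.1 z.2 ε) (nhdsWithin 0 (Set.Ioi 0)) (nhds q)}

/-- The set `D_f([p,q])`. -/
def Dset (f : X → X) (p q : ℝ) : Set (X × X) :=
  {z | ∃ ε₀ > 0, ∀ ε : ℝ, 0 < ε → ε ≤ ε₀ →
        lowF f z.1 z.2 ε = p ∧ uppF f z.1 z.2 ε = q}

end DistChaos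

/-! ### Auxiliary material for the proof -/

namespace Statement9Aux

open Filter Finset

/-! #### Sequences with values in `[0,1]` -/

/-- Sequences with values in `[0,1]`. -/
def Seq01 (w : ℕ → ℝ) : Prop := ∀ N, 0 ≤ w N ∧ w N ≤ 1

lemma Seq01.bddAbove {w : ℕ → ℝ} (hw : Seq01 w) (F : Filter ℕ) :
    F.IsBoundedUnder (· ≤ ·) w :=
  isBoundedUnder_of ⟨1, fun N => (hw N).2⟩

lemma Seq01.bddBelow {w : ℕ → ℝ} (hw : Seq01 w) (F : Filter ℕ) :
    F.IsBoundedUnder (· ≥ ·) w :=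
  isBoundedUnder_of ⟨0, fun N => (hw N).1⟩

lemma Seq01.cobddAbove {w : ℕ → ℝ} (hw : Seq01 w) (F : Filter ℕ) [F.NeBot] :
    F.IsCoboundedUnder (· ≤ ·) w :=
  (hw.bddBelow F).isCoboundedUnder_le

lemma Seq01.cobddBelow {w : ℕ → ℝ} (hw : Seq01 w) (F : Filter ℕ) [F.NeBot] :
    F.IsCoboundedUnder (· ≥ ·) w :=
  (hw.bddAbove F).isCoboundedUnder_ge

/-- limsup along a subsequence is at most the limsup. -/
lemma limsup_comp_le {w : ℕ → ℝ} (hw : Seq01 w) {g : ℕ → ℕ}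
    (hg : Tendsto g atTop atTop) :
    limsup (fun N => w (g N)) atTop ≤ limsup w atTop := by
  have h1 : limsup (fun N => w (g N)) atTop = limsup w (map g atTop) := by
    simp [Filter.limsup, Filter.map_map]; rfl
  rw [h1]
  haveI : (map g atTop).NeBot := map_neBot
  exact limsup_le_limsup_of_le hg (hw.cobddAbove _) (hw.bddAbove _)

/-- the liminf is at most the liminf along a subsequence. -/
lemma le_liminf_comp {w : ℕ → ℝ} (hw : Seq01 w) {g : ℕ → ℕ}
    (hg : Tendsto g atTop atTop) :
    liminf w atTop ≤ liminf (fun N => w (g N)) atTop := by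
  have h1 : liminf (fun N => w (g N)) atTop = liminf w (map g atTop) := by
    simp [Filter.liminf, Filter.map_map]; rfl
  rw [h1]
  haveI : (map g atTop).NeBot := map_neBot
  exact liminf_le_liminf_of_le hg (hw.bddBelow _) (hw.cobddBelow _)

/-- comparison up to a vanishing error, limsup version. -/
lemma limsup_le_limsup_err {u v e : ℕ → ℝ} (hu : Seq01 u) (hv : Seq01 v)
    (he : Tendsto e atTop (nhds 0)) (h : ∀ᶠ N in atTop, u N ≤ v N + e N) :
    limsup u atTop ≤ limsup v atTop := by
  refine le_of_forall_pos_le_add fun η hη => ?_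
  have he' : ∀ᶠ N in atTop, e N < η := he.eventually_lt_const hη
  have h2 : ∀ᶠ N in atTop, u N ≤ v N + η :=
    (h.and he').mono fun N ⟨h1, h2⟩ => h1.trans (by linarith)
  calc limsup u atTop ≤ limsup (fun N => v N + η) atTop :=
        limsup_le_limsup h2 (hu.cobddAbove _)
          (isBoundedUnder_of ⟨1 + η, fun N => by have := (hv N).2; linarith⟩)
    _ = limsup v atTop + η :=
        limsup_add_const atTop v η (hv.bddAbove _) (hv.cobddAbove _)

/-- comparison up to a vanishing error, liminf version. -/
lemma liminf_le_liminf_err {u v e : ℕ → ℝ} (hu : Seq01 u) (hv : Seq01 v)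
    (he : Tendsto e atTop (nhds 0)) (h : ∀ᶠ N in atTop, u N ≤ v N + e N) :
    liminf u atTop ≤ liminf v atTop := by
  refine le_of_forall_pos_le_add fun η hη => ?_
  have he' : ∀ᶠ N in atTop, e N < η := he.eventually_lt_const hη
  have h2 : ∀ᶠ N in atTop, u N ≤ v N + η :=
    (h.and he').mono fun N ⟨h1, h2⟩ => h1.trans (by linarith)
  calc liminf u atTop ≤ liminf (fun N => v N + η) atTop :=
        liminf_le_liminf h2 (hu.bddBelow _)
          (isCoboundedUnder_ge_of_eventually_le (x := 1 + η) _
            (Eventually.of_forall fun N => by have := (hv N).2; linarith))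
    _ = liminf v atTop + η :=
        liminf_add_const atTop v η (hv.cobddBelow _) (hv.bddBelow _)

lemma liminf_mono01 {u v : ℕ → ℝ} (hu : Seq01 u) (hv : Seq01 v)
    (h : ∀ N, u N ≤ v N) : liminf u atTop ≤ liminf v atTop :=
  liminf_le_liminf (Eventually.of_forall h) (hu.bddBelow _) (hv.cobddBelow _)

lemma limsup_mono01 {u v : ℕ → ℝ} (hu : Seq01 u) (hv : Seq01 v)
    (h : ∀ N, u N ≤ v N) : limsup u atTop ≤ limsup v atTop :=
  limsup_le_limsup (Eventually.of_forall h) (hu.cobddAbove _) (hv.bddAbove _)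

/-! #### Counting and frequency functions -/

variable {X : Type*} [MetricSpace X]

/-- The number of times `0 ≤ i < N` for which the orbits of `x` and `y` are `ε`-close. -/
noncomputable def cnt (f : X → X) (x y : X) (ε : ℝ) (N : ℕ) : ℕ :=
  ((Finset.range N).filter fun i => dist (f^[i] x) (f^[i] y) < ε).card

/-- The corresponding frequency. -/
noncomputable def frq (f : X → X) (x y : X) (ε : ℝ) (N : ℕ) : ℝ := (cnt f x y ε N : ℝ) / N

lemma lowF_eq (f : X → X) (x y : X) (ε : ℝ) :
    lowF f x y ε = Filter.liminf (frq f x y ε) Filter.atTop := rfl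

lemma uppF_eq (f : X → X) (x y : X) (ε : ℝ) :
    uppF f x y ε = Filter.limsup (frq f x y ε) Filter.atTop := rfl

lemma cnt_le (f : X → X) (x y : X) (ε : ℝ) (N : ℕ) : cnt f x y ε N ≤ N :=
  (Finset.card_filter_le _ _).trans_eq (Finset.card_range N)

lemma frq01 (f : X → X) (x y : X) (ε : ℝ) : Seq01 (frq f x y ε) := by
  intro N
  constructor
  · rw [frq]; positivity
  · rcases Nat.eq_zero_or_pos N with h | h
    · simp [frq, h]
    · rw [frq, div_le_one (by exact_mod_cast h)]
      exact_mod_cast cnt_le f x y ε N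

lemma cnt_mono_eps (f : X → X) (x y : X) {a b : ℝ} (h : a ≤ b) (N : ℕ) :
    cnt f x y a N ≤ cnt f x y b N := by
  apply Finset.card_le_card
  apply Finset.monotone_filter_right
  intro i _ hi
  exact lt_of_lt_of_le hi h

lemma cnt_mono_N (f : X → X) (x y : X) (ε : ℝ) {M N : ℕ} (h : M ≤ N) :
    cnt f x y ε M ≤ cnt f x y ε N :=
  Finset.card_le_card (Finset.filter_subset_filter _ (Finset.range_subset_range.2 h))

lemma frq_mono_eps (f : X → X) (x y : X) {a b : ℝ} (h : a ≤ b) (N : ℕ) :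
    frq f x y a N ≤ frq f x y b N := by
  rcases Nat.eq_zero_or_pos N with h0 | h0
  · simp [frq, h0]
  · rw [frq, frq]
    apply div_le_div_of_nonneg_right ?_ ?_ |>.trans_eq rfl
    · exact_mod_cast cnt_mono_eps f x y h N
    · exact_mod_cast h0.le

lemma lowF_mono (f : X → X) (x y : X) {a b : ℝ} (h : a ≤ b) :
    lowF f x y a ≤ lowF f x y b := by
  rw [lowF_eq, lowF_eq]
  exact liminf_mono01 (frq01 f x y a) (frq01 f x y b) (frq_mono_eps f x y h)

lemma uppF_mono (f : X → X) (x y : X) {a b : ℝ} (h : a ≤ b) :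
    uppF f x y a ≤ uppF f x y b := by
  rw [uppF_eq, uppF_eq]
  exact limsup_mono01 (frq01 f x y a) (frq01 f x y b) (frq_mono_eps f x y h)

section Counting

variable {f : X → X} {x y : X} {n : ℕ} {ε δ : ℝ}

/-- Counting lemma B: each `δ`-close time of `f^[n]` produces a block of
`n` consecutive `ε`-close times for `f`. -/
lemma cntB (H : ∀ u v : X, dist u v < δ → ∀ k ≤ n, dist (f^[k] u) (f^[k] v) < ε)
    (M : ℕ) : n * cnt (f^[n]) x y δ M ≤ cnt f x y ε (n * M) := by
  classical
  set sJ := (Finset.range M).filter fun j => dist ((f^[n])^[j] x) ((f^[n])^[j] y) < δ with hsJ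
  set sI := (Finset.range (n * M)).filter fun i => dist (f^[i] x) (f^[i] y) < ε with hsI
  have key : (sJ ×ˢ Finset.range n).card ≤ sI.card := by
    apply Finset.card_le_card_of_injOn (fun p => n * p.1 + p.2)
    · rintro ⟨j, r⟩ hp
      rw [Finset.mem_coe, Finset.mem_product] at hp
      obtain ⟨hj, hr⟩ := hp
      rw [hsJ, Finset.mem_filter, Finset.mem_range] at hj
      rw [Finset.mem_range] at hr
      rw [Finset.mem_coe, hsI, Finset.mem_filter, Finset.mem_range]
      constructor
      · calc n * j + r < n * j + n := by omega
          _ = n * (j + 1) := by ring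
          _ ≤ n * M := Nat.mul_le_mul_left n hj.1
      · have hd : dist (f^[n * j] x) (f^[n * j] y) < δ := by
          have := hj.2
          rwa [← Function.iterate_mul] at this
        have := H _ _ hd r (le_of_lt hr)
        rwa [← Function.iterate_add_apply, ← Function.iterate_add_apply,
          Nat.add_comm r (n * j)] at this
    · rintro ⟨j, r⟩ hp ⟨j', r'⟩ hp' hee
      simp only [Finset.coe_product, Set.mem_prod, Finset.mem_coe, Finset.mem_range] at hp hp'
      have hr : r < n := by simpa using hp.2
      have hr' : r' < n := by simpa using hp'.2
      have hee' : n * j + r = n * j' + r' := hee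
      have hn0 : 0 < n := by
        rcases Nat.eq_zero_or_pos n with h0 | h0
        · omega
        · exact h0
      have hjj : j = j' := by
        have e1 : (n * j + r) / n = j := by
          rw [Nat.mul_add_div hn0, Nat.div_eq_of_lt hr, Nat.add_zero]
        have e2 : (n * j' + r') / n = j' := by
          rw [Nat.mul_add_div hn0, Nat.div_eq_of_lt hr', Nat.add_zero]
        rw [← e1, ← e2, hee']
      subst hjj
      have : r = r' := Nat.add_left_cancel hee'
      simp [this]
  have hcard : (sJ ×ˢ Finset.range n).card = n * sJ.card := by
    rw [Finset.card_product, Finset.card_range, mul_comm]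
  rw [hcard] at key
  simpa [cnt, hsJ, hsI] using key

/-- Counting lemma A: each `δ`-close time of `f` produces an `ε`-close time
of `f^[n]` shortly afterwards, with multiplicity at most `n`. -/
lemma cntA (hn : 1 ≤ n) (H : ∀ u v : X, dist u v < δ → ∀ k ≤ n, dist (f^[k] u) (f^[k] v) < ε)
    (N : ℕ) : cnt f x y δ N ≤ n * cnt (f^[n]) x y ε (N / n + 2) := by
  classical
  set sI := (Finset.range N).filter fun i => dist (f^[i] x) (f^[i] y) < δ with hsI
  set sJ := (Finset.range (N / n + 2)).filter
      fun j => dist ((f^[n])^[j] x) ((f^[n])^[j] y) < ε with hsJ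
  have key : sI.card ≤ n * sJ.card := by
    apply Finset.card_le_mul_card_image_of_maps_to (f := fun i => (i + (n - 1)) / n)
    · intro i hi
      rw [hsI, Finset.mem_filter, Finset.mem_range] at hi
      obtain ⟨hiN, hid⟩ := hi
      set b := (i + (n - 1)) / n with hb
      have hbn1 : n * b ≤ i + (n - 1) := by
        rw [hb]; exact Nat.mul_div_le _ n |>.trans_eq (by ring_nf) |>.trans (le_refl _)
      have hbn2 : i + (n - 1) < n * (b + 1) := by
        rw [hb]; exact Nat.lt_mul_div_succ _ (by omega)
      have hmul : n * (b + 1) = n * b + n := by ring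
      have hib : i ≤ n * b := by omega
      have hkn : n * b - i ≤ n := by omega
      rw [hsJ, Finset.mem_filter, Finset.mem_range]
      constructor
      · have h1 : b ≤ (N + n) / n := by
          apply Nat.div_le_div_right
          omega
        have h2 : (N + n) / n = N / n + 1 := Nat.add_div_right N (by omega)
        omega
      · have hd : dist (f^[n * b] x) (f^[n * b] y) < ε := by
          have heq : n * b = (n * b - i) + i := by omega
          rw [heq, Function.iterate_add_apply, Function.iterate_add_apply]
          exact H _ _ hid _ hkn
        rwa [Function.iterate_mul] at hd
    · intro b _
      have hsub : (sI.filter fun i => (i + (n - 1)) / n = b) ⊆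
          Finset.Ico (n * b + 1 - n) (n * b + 1) := by
        intro i hi
        rw [Finset.mem_filter] at hi
        obtain ⟨_, hib⟩ := hi
        have hbn1 : n * b ≤ i + (n - 1) := by
          rw [← hib]; exact Nat.mul_div_le _ n
        have hbn2 : i + (n - 1) < n * (b + 1) := by
          rw [← hib]; exact Nat.lt_mul_div_succ _ (by omega)
        have hmul : n * (b + 1) = n * b + n := by ring
        rw [Finset.mem_Ico]
        omega
      calc (sI.filter fun i => (i + (n - 1)) / n = b).card
          ≤ (Finset.Ico (n * b + 1 - n) (n * b + 1)).card := Finset.card_le_card hsub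
        _ = (n * b + 1) - (n * b + 1 - n) := Nat.card_Ico _ _
        _ ≤ n := by omega
  simpa [cnt, hsI, hsJ] using key

/-! #### Frequency inequalities -/

lemma frqI1 (hn : 1 ≤ n) (H : ∀ u v : X, dist u v < δ → ∀ k ≤ n, dist (f^[k] u) (f^[k] v) < ε)
    (M : ℕ) : frq (f^[n]) x y δ M ≤ frq f x y ε (n * M) := by
  rcases Nat.eq_zero_or_pos M with h0 | hM
  · simp [frq, h0]
  have hB := cntB (x := x) (y := y) H M
  have hMr : (0:ℝ) < M := by exact_mod_cast hM
  have hnMr : (0:ℝ) < ((n * M : ℕ) : ℝ) := by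
    have : 0 < n * M := Nat.mul_pos hn hM
    exact_mod_cast this
  rw [frq, frq, div_le_div_iff₀ hMr hnMr]
  have hc : (n:ℝ) * (cnt (f^[n]) x y δ M : ℝ) ≤ (cnt f x y ε (n * M) : ℝ) := by
    exact_mod_cast hB
  push_cast
  nlinarith [hMr.le]

lemma frqI2 (hn : 1 ≤ n) (H : ∀ u v : X, dist u v < δ → ∀ k ≤ n, dist (f^[k] u) (f^[k] v) < ε)
    (N : ℕ) (hN : n ≤ N) :
    frq (f^[n]) x y δ (N / n) ≤ frq f x y ε N + (n : ℝ) / N := by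
  have hn0 : 0 < n := hn
  set M := N / n with hM
  have hM1 : 1 ≤ M := Nat.one_le_div_iff hn0 |>.2 hN
  have hnat1 : n * cnt (f^[n]) x y δ M ≤ cnt f x y ε N :=
    (cntB H M).trans (cnt_mono_N f x y ε (by rw [hM, mul_comm]; exact Nat.div_mul_le_self N n))
  have hnat2 : N < n * M + n := by
    have hdm := Nat.div_add_mod N n
    have hml := Nat.mod_lt N hn0
    rw [hM]
    omega
  have hnat3 : cnt (f^[n]) x y δ M ≤ M := cnt_le _ _ _ _ _
  have h1 : (n:ℝ) * (cnt (f^[n]) x y δ M : ℝ) ≤ (cnt f x y ε N : ℝ) := by exact_mod_cast hnat1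
  have h2 : (N:ℝ) ≤ (n:ℝ) * (M:ℝ) + (n:ℝ) := by exact_mod_cast hnat2.le
  have h3 : (cnt (f^[n]) x y δ M : ℝ) ≤ (M:ℝ) := by exact_mod_cast hnat3
  set a := (cnt (f^[n]) x y δ M : ℝ)
  set c := (cnt f x y ε N : ℝ)
  have hMr : (0:ℝ) < M := by exact_mod_cast hM1
  have hNr : (0:ℝ) < N := by exact_mod_cast hn0.trans_le hN
  have ha : (0:ℝ) ≤ a := by positivity
  rw [frq, frq, ← add_div, div_le_div_iff₀ hMr hNr]
  nlinarith [mul_le_mul_of_nonneg_right h1 hMr.le, mul_le_mul_of_nonneg_left h2 ha,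
    mul_le_mul_of_nonneg_left h3 (by positivity : (0:ℝ) ≤ (n:ℝ))]

lemma frqI3 (hn : 1 ≤ n) (H : ∀ u v : X, dist u v < δ → ∀ k ≤ n, dist (f^[k] u) (f^[k] v) < ε)
    (N : ℕ) (hN : 1 ≤ N) :
    frq f x y δ N ≤ frq (f^[n]) x y ε (N / n + 2) + 2 * (n : ℝ) / N := by
  have hn0 : 0 < n := hn
  set M := N / n + 2 with hM
  have hnat1 : cnt f x y δ N ≤ n * cnt (f^[n]) x y ε M := cntA hn H N
  have hnat2 : n * M ≤ N + 2 * n := by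
    have : n * (N / n) ≤ N := by rw [mul_comm]; exact Nat.div_mul_le_self N n
    calc n * M = n * (N / n) + 2 * n := by rw [hM]; ring
      _ ≤ N + 2 * n := by omega
  have hnat3 : cnt (f^[n]) x y ε M ≤ M := cnt_le _ _ _ _ _
  have h1 : (cnt f x y δ N : ℝ) ≤ (n:ℝ) * (cnt (f^[n]) x y ε M : ℝ) := by exact_mod_cast hnat1
  have h2 : (n:ℝ) * (M:ℝ) ≤ (N:ℝ) + 2 * (n:ℝ) := by exact_mod_cast hnat2
  have h3 : (cnt (f^[n]) x y ε M : ℝ) ≤ (M:ℝ) := by exact_mod_cast hnat3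
  set a := (cnt f x y δ N : ℝ)
  set b := (cnt (f^[n]) x y ε M : ℝ)
  have hMr : (0:ℝ) < M := by positivity
  have hNr : (0:ℝ) < N := by exact_mod_cast hN
  have hb : (0:ℝ) ≤ b := by positivity
  have key : (a - 2 * n) / N ≤ b / M := by
    rw [div_le_div_iff₀ hNr hMr]
    nlinarith [mul_le_mul_of_nonneg_right h1 hMr.le, mul_le_mul_of_nonneg_left h2 hb,
      mul_le_mul_of_nonneg_left h3 (by positivity : (0:ℝ) ≤ 2 * (n:ℝ))]
  have hsplit : a / N = (a - 2 * n) / N + 2 * (n:ℝ) / N := by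
    rw [← add_div]; ring_nf
  rw [frq, frq]
  rw [hsplit]
  linarith [key]

lemma frqI4 (hn : 1 ≤ n) (H : ∀ u v : X, dist u v < δ → ∀ k ≤ n, dist (f^[k] u) (f^[k] v) < ε)
    (M : ℕ) (hM : 3 ≤ M) :
    frq f x y δ (n * (M - 2)) ≤ frq (f^[n]) x y ε M + 2 / ((M:ℝ) - 2) := by
  have hn0 : 0 < n := hn
  set N := n * (M - 2) with hN
  have hdiv : N / n + 2 = M := by
    rw [hN, Nat.mul_div_cancel_left _ hn0]
    omega
  have hnat1 : cnt f x y δ N ≤ n * cnt (f^[n]) x y ε M := by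
    have := cntA (x := x) (y := y) hn H N
    rwa [hdiv] at this
  have hnat3 : cnt (f^[n]) x y ε M ≤ M := cnt_le _ _ _ _ _
  have h1 : (cnt f x y δ N : ℝ) ≤ (n:ℝ) * (cnt (f^[n]) x y ε M : ℝ) := by exact_mod_cast hnat1
  have h3 : (cnt (f^[n]) x y ε M : ℝ) ≤ (M:ℝ) := by exact_mod_cast hnat3
  set a := (cnt f x y δ N : ℝ)
  set b := (cnt (f^[n]) x y ε M : ℝ)
  have hM2 : (0:ℝ) < (M:ℝ) - 2 := by
    have : (3:ℝ) ≤ M := by exact_mod_cast hM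
    linarith
  have hMr : (0:ℝ) < M := by linarith
  have hNcast : (N:ℝ) = n * ((M:ℝ) - 2) := by
    rw [hN]
    push_cast [Nat.cast_sub (by omega : 2 ≤ M)]
    ring
  have hNr : (0:ℝ) < N := by
    rw [hNcast]; positivity
  have hb : (0:ℝ) ≤ b := by positivity
  have step1 : a / N ≤ b / ((M:ℝ) - 2) := by
    rw [div_le_div_iff₀ hNr hM2, hNcast]
    nlinarith
  have step2 : b / ((M:ℝ) - 2) ≤ b / M + 2 / ((M:ℝ) - 2) := by
    have k1 : (b - 2) / ((M:ℝ) - 2) ≤ b / M := by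
      rw [div_le_div_iff₀ hM2 hMr]
      nlinarith
    have : b / ((M:ℝ) - 2) = (b - 2) / ((M:ℝ) - 2) + 2 / ((M:ℝ) - 2) := by
      rw [← add_div]; ring_nf
    linarith
  rw [frq, frq]
  exact step1.trans step2

end Counting

/-! #### Uniform continuity of iterates, and the key interleaving estimate -/

/-- Uniform continuity of the first `n` iterates. -/
lemma unif_iter [CompactSpace X] {f : X → X} (hfc : Continuous f) (n : ℕ) :
    ∀ ε > (0:ℝ), ∃ δ, 0 < δ ∧ δ ≤ ε ∧
      ∀ u v : X, dist u v < δ → ∀ k ≤ n, dist (f^[k] u) (f^[k] v) < ε := by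
  intro ε hε
  induction n with
  | zero =>
      exact ⟨ε, hε, le_refl ε, fun u v h k hk => by
        interval_cases k; simpa using h⟩
  | succ m ih =>
      obtain ⟨δ', hδ'0, hδ'ε, hδ'⟩ := ih
      have hcont : Continuous (f^[m+1]) := hfc.iterate (m+1)
      have huc : UniformContinuous (f^[m+1]) :=
        CompactSpace.uniformContinuous_of_continuous hcont
      obtain ⟨δ'', hδ''0, hδ''⟩ := Metric.uniformContinuous_iff.mp huc ε hε
      refine ⟨min δ' δ'', lt_min hδ'0 hδ''0, (min_le_left _ _).trans hδ'ε, ?_⟩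
      intro u v h k hk
      rcases Nat.lt_or_ge k (m+1) with hk' | hk'
      · exact hδ' u v (h.trans_le (min_le_left _ _)) k (by omega)
      · have : k = m + 1 := by omega
        subst this
        exact hδ'' (h.trans_le (min_le_right _ _))

/-- Auxiliary subsequence maps tend to infinity. -/
lemma tendsto_mul_left_atTop {n : ℕ} (hn : 1 ≤ n) :
    Filter.Tendsto (fun M : ℕ => n * M) atTop atTop :=
  tendsto_atTop_mono (fun M => Nat.le_mul_of_pos_left M hn) tendsto_id

lemma tendsto_div_const_atTop {n : ℕ} (hn : 1 ≤ n) :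
    Filter.Tendsto (fun N : ℕ => N / n) atTop atTop := by
  apply tendsto_atTop_atTop.2
  intro b
  refine ⟨n * b, fun a ha => ?_⟩
  rw [Nat.le_div_iff_mul_le hn]
  have hbn : b * n = n * b := Nat.mul_comm b n
  omega

set_option maxHeartbeats 1000000 in
/-- **Key interleaving estimate.** -/
lemma key_estimate [CompactSpace X] {f : X → X} (hfc : Continuous f) {n : ℕ} (hn : 1 ≤ n) :
    ∀ ε > (0:ℝ), ∃ δ, 0 < δ ∧ δ ≤ ε ∧ ∀ x y : X,
      (lowF (f^[n]) x y δ ≤ lowF f x y ε ∧ lowF f x y δ ≤ lowF (f^[n]) x y ε) ∧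
      (uppF (f^[n]) x y δ ≤ uppF f x y ε ∧ uppF f x y δ ≤ uppF (f^[n]) x y ε) := by
  intro ε hε
  obtain ⟨δ, hδ0, hδε, H⟩ := unif_iter hfc n ε hε
  refine ⟨δ, hδ0, hδε, fun x y => ?_⟩
  have sA := frq01 (f^[n]) x y δ
  have sB := frq01 f x y ε
  have sC := frq01 f x y δ
  have sD := frq01 (f^[n]) x y ε
  -- error terms
  have e1 : Filter.Tendsto (fun N : ℕ => (n:ℝ) / N) atTop (nhds 0) :=
    tendsto_const_div_atTop_nhds_zero_nat (n:ℝ)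
  have e2 : Filter.Tendsto (fun N : ℕ => 2 * (n:ℝ) / N) atTop (nhds 0) := by
    have := tendsto_const_div_atTop_nhds_zero_nat (2 * (n:ℝ))
    simpa using this
  have e3 : Filter.Tendsto (fun M : ℕ => 2 / ((M:ℝ) - 2)) atTop (nhds 0) := by
    apply Filter.Tendsto.div_atTop (tendsto_const_nhds)
    have h := tendsto_atTop_add_const_right atTop (-2 : ℝ) tendsto_natCast_atTop_atTop
    simpa [sub_eq_add_neg] using h
  refine ⟨⟨?_, ?_⟩, ?_, ?_⟩
  · -- lowF (f^[n]) δ ≤ lowF f ε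
    rw [lowF_eq, lowF_eq]
    calc Filter.liminf (frq (f^[n]) x y δ) atTop
        ≤ Filter.liminf (fun N => frq (f^[n]) x y δ (N / n)) atTop :=
          le_liminf_comp sA (tendsto_div_const_atTop hn)
      _ ≤ Filter.liminf (frq f x y ε) atTop := by
          apply liminf_le_liminf_err (fun N => sA (N / n)) sB e1
          filter_upwards [eventually_ge_atTop n] with N hN
          exact frqI2 hn H N hN
  · -- lowF f δ ≤ lowF (f^[n]) ε
    rw [lowF_eq, lowF_eq]
    calc Filter.liminf (frq f x y δ) atTop
        ≤ Filter.liminf (fun M => frq f x y δ (n * (M - 2))) atTop := by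
          apply le_liminf_comp sC
          apply tendsto_atTop_mono (fun M => Nat.le_mul_of_pos_left (M - 2) hn)
          exact tendsto_sub_atTop_nat 2
      _ ≤ Filter.liminf (frq (f^[n]) x y ε) atTop := by
          apply liminf_le_liminf_err (fun M => sC (n * (M - 2))) sD e3
          filter_upwards [eventually_ge_atTop 3] with M hM
          exact frqI4 hn H M hM
  · -- uppF (f^[n]) δ ≤ uppF f ε
    rw [uppF_eq, uppF_eq]
    calc Filter.limsup (frq (f^[n]) x y δ) atTop
        ≤ Filter.limsup (fun M => frq f x y ε (n * M)) atTop :=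
          limsup_mono01 sA (fun M => sB (n * M)) (frqI1 hn H)
      _ ≤ Filter.limsup (frq f x y ε) atTop :=
          limsup_comp_le sB (tendsto_mul_left_atTop hn)
  · -- uppF f δ ≤ uppF (f^[n]) ε
    rw [uppF_eq, uppF_eq]
    calc Filter.limsup (frq f x y δ) atTop
        ≤ Filter.limsup (fun N => frq (f^[n]) x y ε (N / n + 2)) atTop := by
          apply limsup_le_limsup_err sC (fun N => sD (N / n + 2)) e2
          filter_upwards [eventually_ge_atTop 1] with N hN
          exact frqI3 hn H N hN
      _ ≤ Filter.limsup (frq (f^[n]) x y ε) atTop := by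
          have hg : Filter.Tendsto (fun N : ℕ => N / n + 2) atTop atTop :=
            tendsto_atTop_mono (fun N => Nat.le_add_right _ 2) (tendsto_div_const_atTop hn)
          exact limsup_comp_le sD hg

/-! #### Interleaving lemmas -/

/-- Interleaving lemma, tendsto version. -/
lemma interleave_tendsto {g h : ℝ → ℝ}
    (hgm : ∀ a b : ℝ, 0 < a → a ≤ b → g a ≤ g b)
    (hhm : ∀ a b : ℝ, 0 < a → a ≤ b → h a ≤ h b)
    (IP : ∀ ε > (0:ℝ), ∃ δ, 0 < δ ∧ δ ≤ ε ∧ g δ ≤ h ε ∧ h δ ≤ g ε)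
    {p : ℝ} (hh : Filter.Tendsto h (nhdsWithin 0 (Set.Ioi 0)) (nhds p)) :
    Filter.Tendsto g (nhdsWithin 0 (Set.Ioi 0)) (nhds p) := by
  have claim1 : ∀ ε > (0:ℝ), p ≤ h ε := by
    intro ε hε
    by_contra hcon
    push_neg at hcon
    have h1 : ∀ᶠ ε' in nhdsWithin (0:ℝ) (Set.Ioi 0), h ε < h ε' :=
      hh.eventually (eventually_gt_nhds hcon)
    have h2 : ∀ᶠ ε' in nhdsWithin (0:ℝ) (Set.Ioi 0), ε' ∈ Set.Ioc (0:ℝ) ε :=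
      Ioc_mem_nhdsGT_of_mem ⟨le_refl 0, hε⟩
    obtain ⟨ε', hlt, h0ε, hεε⟩ := (h1.and h2).exists
    exact absurd (hhm ε' ε h0ε hεε) (not_le.2 hlt)
  have claim2 : ∀ ε > (0:ℝ), p ≤ g ε := by
    intro ε hε
    obtain ⟨δ, hδ0, hδε, _, h2⟩ := IP ε hε
    exact (claim1 δ hδ0).trans h2
  rw [Metric.tendsto_nhdsWithin_nhds]
  intro η hη
  have h1 : ∀ᶠ ε' in nhdsWithin (0:ℝ) (Set.Ioi 0), h ε' < p + η :=
    hh.eventually (eventually_lt_nhds (by linarith))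
  have h2 : ∀ᶠ ε' in nhdsWithin (0:ℝ) (Set.Ioi 0), ε' ∈ Set.Ioi (0:ℝ) :=
    eventually_mem_nhdsWithin
  obtain ⟨ε₁, hε₁, hε₁0⟩ := (h1.and h2).exists
  obtain ⟨δ₁, hδ₁0, hδ₁ε, hgh, _⟩ := IP ε₁ hε₁0
  refine ⟨δ₁, hδ₁0, fun {ε} hε hdist => ?_⟩
  have hε0 : 0 < ε := hε
  have hεδ : ε ≤ δ₁ := by
    rw [Real.dist_eq, sub_zero, abs_of_pos hε0] at hdist
    linarith [hdist]
  have hub : g ε < p + η := lt_of_le_of_lt ((hgm ε δ₁ hε0 hεδ).trans hgh) hε₁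
  have hlb : p ≤ g ε := claim2 ε hε0
  rw [Real.dist_eq, abs_lt]
  constructor <;> linarith

/-- Interleaving lemma, eventually-constant version. -/
lemma interleave_const {g h : ℝ → ℝ}
    (hgm : ∀ a b : ℝ, 0 < a → a ≤ b → g a ≤ g b)
    (IP : ∀ ε > (0:ℝ), ∃ δ, 0 < δ ∧ δ ≤ ε ∧ g δ ≤ h ε ∧ h δ ≤ g ε)
    {p : ℝ} {ε₀ : ℝ} (hε₀ : 0 < ε₀) (hh : ∀ ε : ℝ, 0 < ε → ε ≤ ε₀ → h ε = p) :
    ∃ δ₀ > (0:ℝ), ∀ ε : ℝ, 0 < ε → ε ≤ δ₀ → g ε = p := by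
  have claim2 : ∀ ε > (0:ℝ), p ≤ g ε := by
    intro ε hε
    obtain ⟨δ, hδ0, hδε, _, h2⟩ := IP (min ε ε₀) (lt_min hε hε₀)
    have hp : h δ = p := hh δ hδ0 (hδε.trans (min_le_right _ _))
    calc p = h δ := hp.symm
      _ ≤ g (min ε ε₀) := h2
      _ ≤ g ε := hgm _ _ (lt_min hε hε₀) (min_le_left _ _)
  obtain ⟨δ₀, hδ₀0, hδ₀ε, hgh, _⟩ := IP ε₀ hε₀
  refine ⟨δ₀, hδ₀0, fun ε hε hεδ => ?_⟩
  have h1 : g ε ≤ g δ₀ := hgm ε δ₀ hε hεδ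
  have h2 : g δ₀ ≤ p := hgh.trans_eq (hh ε₀ hε₀ (le_refl _))
  exact le_antisymm (h1.trans h2) (claim2 ε hε)

end Statement9Aux

open Statement9Aux in
/-- Let `X` be a compact metric space, `f : X → X` a continuous
surjection, `n ≥ 1`, and `[p,q]` a compact subinterval of `[0,1]`. Then
`E_{f^n}([p,q]) = E_f([p,q])` and `D_{f^n}([p,q]) = D_f([p,q])`. -/
theorem statement_9 {X : Type*} [MetricSpace X] [CompactSpace X] (f : X → X)
    (hfc : Continuous f) (hfs : Function.Surjective f) (n : ℕ) (hn : 1 ≤ n)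
    (p q : ℝ) (hp : 0 ≤ p) (hpq : p ≤ q) (hq : q ≤ 1) :
    Eset (f^[n]) p q = Eset f p q ∧ Dset (f^[n]) p q = Dset f p q := by
  classical
  have key := key_estimate hfc hn
  -- monotonicity, packaged
  have lmono : ∀ (g : X → X) (x y : X), ∀ a b : ℝ, 0 < a → a ≤ b →
      lowF g x y a ≤ lowF g x y b := fun g x y a b _ hab => lowF_mono g x y hab
  have umono : ∀ (g : X → X) (x y : X), ∀ a b : ℝ, 0 < a → a ≤ b →
      uppF g x y a ≤ uppF g x y b := fun g x y a b _ hab => uppF_mono g x y hab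
  -- interleaving properties, in both orientations
  have IPlow : ∀ x y : X, ∀ ε > (0:ℝ), ∃ δ, 0 < δ ∧ δ ≤ ε ∧
      lowF (f^[n]) x y δ ≤ lowF f x y ε ∧ lowF f x y δ ≤ lowF (f^[n]) x y ε := by
    intro x y ε hε
    obtain ⟨δ, h0, h1, h2⟩ := key ε hε
    exact ⟨δ, h0, h1, (h2 x y).1⟩
  have IPlow' : ∀ x y : X, ∀ ε > (0:ℝ), ∃ δ, 0 < δ ∧ δ ≤ ε ∧
      lowF f x y δ ≤ lowF (f^[n]) x y ε ∧ lowF (f^[n]) x y δ ≤ lowF f x y ε := by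
    intro x y ε hε
    obtain ⟨δ, h0, h1, h2⟩ := key ε hε
    exact ⟨δ, h0, h1, ((h2 x y).1).2, ((h2 x y).1).1⟩
  have IPupp : ∀ x y : X, ∀ ε > (0:ℝ), ∃ δ, 0 < δ ∧ δ ≤ ε ∧
      uppF (f^[n]) x y δ ≤ uppF f x y ε ∧ uppF f x y δ ≤ uppF (f^[n]) x y ε := by
    intro x y ε hε
    obtain ⟨δ, h0, h1, h2⟩ := key ε hε
    exact ⟨δ, h0, h1, (h2 x y).2⟩
  have IPupp' : ∀ x y : X, ∀ ε > (0:ℝ), ∃ δ, 0 < δ ∧ δ ≤ ε ∧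
      uppF f x y δ ≤ uppF (f^[n]) x y ε ∧ uppF (f^[n]) x y δ ≤ uppF f x y ε := by
    intro x y ε hε
    obtain ⟨δ, h0, h1, h2⟩ := key ε hε
    exact ⟨δ, h0, h1, ((h2 x y).2).2, ((h2 x y).2).1⟩
  constructor
  · -- E-sets
    ext z
    simp only [Eset, Set.mem_setOf_eq]
    constructor
    · rintro ⟨h1, h2⟩
      exact ⟨interleave_tendsto (lmono f z.1 z.2) (lmono (f^[n]) z.1 z.2)
          (IPlow' z.1 z.2) h1,
        interleave_tendsto (umono f z.1 z.2) (umono (f^[n]) z.1 z.2)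
          (IPupp' z.1 z.2) h2⟩
    · rintro ⟨h1, h2⟩
      exact ⟨interleave_tendsto (lmono (f^[n]) z.1 z.2) (lmono f z.1 z.2)
          (IPlow z.1 z.2) h1,
        interleave_tendsto (umono (f^[n]) z.1 z.2) (umono f z.1 z.2)
          (IPupp z.1 z.2) h2⟩
  · -- D-sets
    ext z
    simp only [Dset, Set.mem_setOf_eq]
    constructor
    · rintro ⟨ε₀, hε₀, hc⟩
      obtain ⟨δ₁, hδ₁, hc₁⟩ := interleave_const (lmono f z.1 z.2) (IPlow' z.1 z.2)
        hε₀ (fun ε h1 h2 => (hc ε h1 h2).1)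
      obtain ⟨δ₂, hδ₂, hc₂⟩ := interleave_const (umono f z.1 z.2) (IPupp' z.1 z.2)
        hε₀ (fun ε h1 h2 => (hc ε h1 h2).2)
      refine ⟨min δ₁ δ₂, lt_min hδ₁ hδ₂, fun ε h1 h2 => ?_⟩
      exact ⟨hc₁ ε h1 (h2.trans (min_le_left _ _)), hc₂ ε h1 (h2.trans (min_le_right _ _))⟩
    · rintro ⟨ε₀, hε₀, hc⟩
      obtain ⟨δ₁, hδ₁, hc₁⟩ := interleave_const (lmono (f^[n]) z.1 z.2) (IPlow z.1 z.2)
        hε₀ (fun ε h1 h2 => (hc ε h1 h2).1)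
      obtain ⟨δ₂, hδ₂, hc₂⟩ := interleave_const (umono (f^[n]) z.1 z.2) (IPupp z.1 z.2)
        hε₀ (fun ε h1 h2 => (hc ε h1 h2).2)
      refine ⟨min δ₁ δ₂, lt_min hδ₁ hδ₂, fun ε h1 h2 => ?_⟩
      exact ⟨hc₁ ε h1 (h2.trans (min_le_left _ _)), hc₂ ε h1 (h2.trans (min_le_right _ _))⟩
end

section
/- Let α = (n_i)_{i≥0} be a sequence of positive integers with n_i ≥ 2 for infinitely many i, and let Σ_α = ∏_{i≥0}{0,…,n_i−1} be equipped with the metric ρ(x,y) = ∏_{0≤i<δ(x,y)} n_i^{−1} for x ≠ y (δ(x,y) = min{i ≥ 0 : x_i ≠ y_i}) and ρ(x,x) = 0. Then dim_H Σ_α = 1 and H^1(Σ_α) = 1. -/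
open Filter Set MeasureTheory Topology TopologicalSpace

noncomputable section

/-- The symbolic space `Σ_α = ∏_{i≥0} {0,…,n_i−1}` for a sequence `α = (n_i)` of
positive integers. -/
def PiSeq (α : ℕ → ℕ+) : Type := ∀ i : ℕ, Fin (α i)

namespace PiSeq

variable {α : ℕ → ℕ+}

theorem exists_ne {x y : PiSeq α} (h : ¬x = y) : ∃ i, x i ≠ y i := by
  by_contra hc
  push_neg at hc
  exact h (funext hc)

instance decPredNe (x y : PiSeq α) : DecidablePred fun n => x n ≠ y n :=
  fun _ => inferInstance

open Classical in
/-- The metric `ρ(x,y) = ∏_{0 ≤ i < δ(x,y)} n_i⁻¹` on `Σ_α`. -/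
def sdist (x y : PiSeq α) : ℝ :=
  if h : x = y then 0
  else ∏ i ∈ Finset.range (Nat.find (exists_ne h)), (((α i : ℕ) : ℝ))⁻¹

theorem sdist_self (x : PiSeq α) : sdist x x = 0 := by
  unfold sdist
  exact dif_pos rfl

theorem sdist_eq {x y : PiSeq α} (h : ¬x = y) :
    sdist x y = ∏ i ∈ Finset.range (Nat.find (exists_ne h)), (((α i : ℕ) : ℝ))⁻¹ := by
  unfold sdist
  exact dif_neg h

theorem factor_pos (i : ℕ) : (0:ℝ) < (((α i : ℕ) : ℝ))⁻¹ := by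
  have : (0:ℝ) < ((α i : ℕ) : ℝ) := by exact_mod_cast (α i).pos
  positivity

theorem factor_le_one (i : ℕ) : (((α i : ℕ) : ℝ))⁻¹ ≤ 1 := by
  have : (1:ℝ) ≤ ((α i : ℕ) : ℝ) := by exact_mod_cast (α i).one_le
  exact inv_le_one_of_one_le₀ this

theorem prod_pos (n : ℕ) : (0:ℝ) < ∏ i ∈ Finset.range n, (((α i : ℕ) : ℝ))⁻¹ :=
  Finset.prod_pos fun i _ => factor_pos i

theorem prod_anti {m n : ℕ} (h : m ≤ n) :
    ∏ i ∈ Finset.range n, (((α i : ℕ) : ℝ))⁻¹ ≤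
      ∏ i ∈ Finset.range m, (((α i : ℕ) : ℝ))⁻¹ := by
  rw [← Finset.prod_range_mul_prod_Ico _ h]
  apply mul_le_of_le_one_right (le_of_lt (prod_pos m))
  exact Finset.prod_le_one (fun i _ => (factor_pos i).le) (fun i _ => factor_le_one i)

theorem sdist_nonneg' (x y : PiSeq α) : 0 ≤ sdist x y := by
  by_cases h : x = y
  · rw [h, sdist_self]
  · rw [sdist_eq h]
    exact (prod_pos _).le

theorem eq_of_lt_find {x y : PiSeq α} (h : ¬x = y) {i : ℕ}
    (hi : i < Nat.find (exists_ne h)) : x i = y i :=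
  not_not.mp (Nat.find_min (exists_ne h) hi)

theorem sdist_le_of_agree {x y : PiSeq α} {n : ℕ} (h : ∀ i < n, x i = y i) :
    sdist x y ≤ ∏ i ∈ Finset.range n, (((α i : ℕ) : ℝ))⁻¹ := by
  by_cases hxy : x = y
  · rw [hxy, sdist_self]
    exact (prod_pos n).le
  · rw [sdist_eq hxy]
    apply prod_anti
    rw [Nat.le_find_iff]
    intro m hm
    simp only [ne_eq, not_not]
    exact h m hm

theorem sdist_comm (x y : PiSeq α) : sdist x y = sdist y x := by
  by_cases h : x = y
  · rw [h]
  · rw [sdist_eq h, sdist_eq (fun hyx => h hyx.symm)]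
    congr 2
    exact le_antisymm (Nat.find_mono fun n hn => hn.symm)
      (Nat.find_mono fun n hn => hn.symm)

theorem sdist_le_max (x y z : PiSeq α) : sdist x z ≤ max (sdist x y) (sdist y z) := by
  by_cases hxz : x = z
  · rw [hxz, sdist_self]
    exact le_max_of_le_left (sdist_nonneg' _ _)
  by_cases hxy : x = y
  · rw [hxy]; exact le_max_right _ _
  by_cases hyz : y = z
  · rw [← hyz]; exact le_max_left _ _
  rcases le_total (Nat.find (exists_ne hxy)) (Nat.find (exists_ne hyz)) with hle | hle
  · refine le_max_of_le_left ?_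
    rw [sdist_eq hxy]
    exact sdist_le_of_agree fun i hi =>
      (eq_of_lt_find hxy hi).trans (eq_of_lt_find hyz (lt_of_lt_of_le hi hle))
  · refine le_max_of_le_right ?_
    rw [sdist_eq hyz]
    exact sdist_le_of_agree fun i hi =>
      (eq_of_lt_find hxy (lt_of_lt_of_le hi hle)).trans (eq_of_lt_find hyz hi)

theorem eq_of_sdist_eq_zero {x y : PiSeq α} (h : sdist x y = 0) : x = y := by
  by_contra hxy
  rw [sdist_eq hxy] at h
  exact absurd h (ne_of_gt (prod_pos _))

instance : MetricSpace (PiSeq α) where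
  dist := sdist
  dist_self := sdist_self
  dist_comm := sdist_comm
  dist_triangle x y z :=
    (sdist_le_max x y z).trans (max_le_add_of_nonneg (sdist_nonneg' _ _) (sdist_nonneg' _ _))
  eq_of_dist_eq_zero := fun h => eq_of_sdist_eq_zero h

instance : MeasurableSpace (PiSeq α) := borel _

instance : BorelSpace (PiSeq α) := ⟨rfl⟩

end PiSeq


open scoped ENNReal NNReal

namespace Statement10Aux

variable (α : ℕ → ℕ+)

/-- `p n = ∏_{i<n} n_i⁻¹`. -/
def p (n : ℕ) : ℝ := ∏ i ∈ Finset.range n, (((α i : ℕ) : ℝ))⁻¹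

theorem apos (i : ℕ) : (0:ℝ) < ((α i : ℕ) : ℝ) := by exact_mod_cast (α i).pos

theorem p_pos (n : ℕ) : 0 < p α n := PiSeq.prod_pos (α := α) n

theorem p_anti {m n : ℕ} (h : m ≤ n) : p α n ≤ p α m := PiSeq.prod_anti (α := α) h

theorem p_zero : p α 0 = 1 := by simp [p]

theorem p_succ (n : ℕ) : p α (n + 1) = p α n * (((α n : ℕ) : ℝ))⁻¹ :=
  Finset.prod_range_succ _ n

theorem p_mul (n : ℕ) : ((α n : ℕ) : ℝ) * p α (n + 1) = p α n := by
  rw [p_succ]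
  field_simp

/-- `g n = p n − p (n+1)`. -/
def g (n : ℕ) : ℝ := p α n - p α (n + 1)

theorem g_nonneg (n : ℕ) : 0 ≤ g α n := sub_nonneg.2 (p_anti α (Nat.le_succ n))

theorem g_eq (n : ℕ) : g α n = (((α n : ℕ) : ℝ) - 1) * p α (n + 1) := by
  rw [g, sub_mul, one_mul, p_mul]

theorem tendsto_p (hα : ∀ N : ℕ, ∃ i, N ≤ i ∧ 2 ≤ (α i : ℕ)) :
    Filter.Tendsto (p α) Filter.atTop (nhds 0) := by
  choose idx hidx1 hidx2 using hα
  set J : ℕ → ℕ := fun k => Nat.rec 0 (fun _ m => idx m + 1) k with hJ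
  have hJs : ∀ k, J (k + 1) = idx (J k) + 1 := fun k => rfl
  have key : ∀ k, p α (J k) ≤ (1 / 2 : ℝ) ^ k := by
    intro k
    induction k with
    | zero => simp [hJ, p_zero]
    | succ k ih =>
      have h2 : (((α (idx (J k)) : ℕ) : ℝ))⁻¹ ≤ 1 / 2 := by
        have h2' : (2 : ℝ) ≤ ((α (idx (J k)) : ℕ) : ℝ) := by exact_mod_cast hidx2 (J k)
        rw [inv_le_comm₀ (apos α _) (by norm_num)]
        linarith
      have h3 : p α (idx (J k)) ≤ p α (J k) := p_anti α (hidx1 (J k))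
      calc p α (J (k + 1)) = p α (idx (J k)) * (((α (idx (J k)) : ℕ) : ℝ))⁻¹ := by
            rw [hJs, p_succ]
        _ ≤ (1 / 2 : ℝ) ^ k * (1 / 2) := by
            apply mul_le_mul (h3.trans ih) h2 (inv_nonneg.2 (apos α _).le)
            positivity
        _ = (1 / 2 : ℝ) ^ (k + 1) := by ring
  rw [Metric.tendsto_atTop]
  intro ε hε
  obtain ⟨k, hk⟩ : ∃ k : ℕ, (1 / 2 : ℝ) ^ k < ε :=
    exists_pow_lt_of_lt_one hε (by norm_num)
  refine ⟨J k, fun n hn => ?_⟩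
  rw [Real.dist_eq, sub_zero, abs_of_pos (p_pos α n)]
  exact lt_of_le_of_lt ((p_anti α hn).trans (key k)) hk

theorem hasSum_tail (hp : Filter.Tendsto (p α) Filter.atTop (nhds 0)) (n : ℕ) :
    HasSum (fun i => if i < n then 0 else g α i) (p α n) := by
  rw [hasSum_iff_tendsto_nat_of_nonneg]
  · have hev : ∀ᶠ m in Filter.atTop,
        p α n - p α m = ∑ i ∈ Finset.range m, (if i < n then 0 else g α i) := by
      filter_upwards [Filter.eventually_ge_atTop n] with m hm
      induction m, hm using Nat.le_induction with
      | base =>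
        rw [sub_self]
        symm
        apply Finset.sum_eq_zero
        intro i hi
        rw [if_pos (Finset.mem_range.1 hi)]
      | succ m hm ih =>
        rw [Finset.sum_range_succ, ← ih, if_neg (not_lt.2 hm), g]
        ring
    have hlim : Filter.Tendsto (fun m => p α n - p α m) Filter.atTop (nhds (p α n)) := by
      simpa using Filter.Tendsto.const_sub (p α n) hp
    exact Filter.Tendsto.congr' hev hlim
  · intro i
    split
    · exact le_rfl
    · exact g_nonneg α i

theorem summable_g (hp : Filter.Tendsto (p α) Filter.atTop (nhds 0)) : Summable (g α) := by
  have := (hasSum_tail α hp 0).summable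
  simpa using this

theorem term_nonneg (x : PiSeq α) (i : ℕ) : 0 ≤ ((x i : ℕ) : ℝ) * p α (i + 1) :=
  mul_nonneg (Nat.cast_nonneg _) (p_pos α _).le

theorem fin_le (x : PiSeq α) (i : ℕ) : ((x i : ℕ) : ℝ) ≤ ((α i : ℕ) : ℝ) - 1 := by
  have : (x i : ℕ) + 1 ≤ (α i : ℕ) := (x i).isLt
  have : ((x i : ℕ) : ℝ) + 1 ≤ ((α i : ℕ) : ℝ) := by exact_mod_cast this
  linarith

theorem term_le (x : PiSeq α) (i : ℕ) : ((x i : ℕ) : ℝ) * p α (i + 1) ≤ g α i := by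
  rw [g_eq]
  exact mul_le_mul_of_nonneg_right (fin_le α x i) (p_pos α _).le

theorem summable_term (hp : Filter.Tendsto (p α) Filter.atTop (nhds 0)) (x : PiSeq α) :
    Summable (fun i => ((x i : ℕ) : ℝ) * p α (i + 1)) :=
  Summable.of_nonneg_of_le (term_nonneg α x) (term_le α x) (summable_g α hp)

/-- The "base-α expansion" map `Σ_α → ℝ`. -/
def f (x : PiSeq α) : ℝ := ∑' i, ((x i : ℕ) : ℝ) * p α (i + 1)

theorem f_dist (hp : Filter.Tendsto (p α) Filter.atTop (nhds 0)) (x y : PiSeq α) :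
    dist (f α x) (f α y) ≤ dist x y := by
  by_cases h : x = y
  · simp [h]
  · have hdxy : dist x y
        = ∏ i ∈ Finset.range (Nat.find (PiSeq.exists_ne h)), (((α i : ℕ) : ℝ))⁻¹ :=
      PiSeq.sdist_eq h
    set n := Nat.find (PiSeq.exists_ne h) with hn
    have hdxy' : dist x y = p α n := hdxy
    have hsx := summable_term α hp x
    have hsy := summable_term α hp y
    have hdiff : f α x - f α y = ∑' i, (((x i : ℕ) : ℝ) - ((y i : ℕ) : ℝ)) * p α (i + 1) := by
      rw [f, f, ← Summable.tsum_sub hsx hsy]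
      congr 1
      funext i
      ring
    have hsub : Summable (fun i => (((x i : ℕ) : ℝ) - ((y i : ℕ) : ℝ)) * p α (i + 1)) := by
      have := hsx.sub hsy
      apply this.congr
      intro i
      ring
    have hb : ∀ i, |(((x i : ℕ) : ℝ) - ((y i : ℕ) : ℝ)) * p α (i + 1)|
        ≤ (if i < n then 0 else g α i) := by
      intro i
      by_cases hi : i < n
      · have hxy : x i = y i := PiSeq.eq_of_lt_find h hi
        rw [if_pos hi, hxy]
        simp
      · rw [if_neg hi, abs_mul, abs_of_pos (p_pos α _), g_eq]
        apply mul_le_mul_of_nonneg_right _ (p_pos α _).le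
        rw [abs_le]
        constructor
        · have h1 := fin_le α y i
          have h2 : (0:ℝ) ≤ ((x i : ℕ) : ℝ) := Nat.cast_nonneg _
          linarith
        · have h1 := fin_le α x i
          have h2 : (0:ℝ) ≤ ((y i : ℕ) : ℝ) := Nat.cast_nonneg _
          linarith
    have hTsum := (hasSum_tail α hp n).summable
    have hb1 : ∀ i, (((x i : ℕ) : ℝ) - ((y i : ℕ) : ℝ)) * p α (i + 1)
        ≤ (if i < n then 0 else g α i) := fun i => (le_abs_self _).trans (hb i)
    have hb2 : ∀ i, -((((x i : ℕ) : ℝ) - ((y i : ℕ) : ℝ)) * p α (i + 1))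
        ≤ (if i < n then 0 else g α i) := fun i => (neg_le_abs _).trans (hb i)
    have hd1 : f α x - f α y ≤ p α n := by
      rw [hdiff, ← (hasSum_tail α hp n).tsum_eq]
      exact Summable.tsum_le_tsum hb1 hsub hTsum
    have hd2 : -(f α x - f α y) ≤ p α n := by
      rw [hdiff, ← tsum_neg, ← (hasSum_tail α hp n).tsum_eq]
      exact Summable.tsum_le_tsum hb2 hsub.neg hTsum
    rw [Real.dist_eq, hdxy', abs_le]
    constructor
    · linarith
    · linarith

/-- digit extraction -/
def dig (r : ℝ) (n : ℕ) : ℕ := min (⌊r / p α (n + 1)⌋₊) ((α n : ℕ) - 1)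

theorem dig_lt (r : ℝ) (n : ℕ) : dig α r n < (α n : ℕ) :=
  lt_of_le_of_lt (min_le_right _ _) (Nat.sub_lt (α n).pos one_pos)

def rem (t : ℝ) : ℕ → ℝ
  | 0 => t
  | n + 1 => rem t n - (dig α (rem t n) n : ℝ) * p α (n + 1)

def digits (t : ℝ) : PiSeq α := fun n => ⟨dig α (rem α t n) n, dig_lt α _ n⟩

theorem rem_mem {t : ℝ} (ht0 : 0 ≤ t) (ht1 : t ≤ 1) (n : ℕ) :
    0 ≤ rem α t n ∧ rem α t n ≤ p α n := by
  induction n with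
  | zero => exact ⟨ht0, by rw [p_zero]; exact ht1⟩
  | succ n ih =>
    obtain ⟨h0, h1⟩ := ih
    have hppos := p_pos α (n + 1)
    constructor
    · have hd : (dig α (rem α t n) n : ℝ) ≤ rem α t n / p α (n + 1) := by
        calc (dig α (rem α t n) n : ℝ) ≤ (⌊rem α t n / p α (n + 1)⌋₊ : ℝ) := by
              exact_mod_cast min_le_left _ _
          _ ≤ rem α t n / p α (n + 1) := Nat.floor_le (by positivity)
      have hmul : (dig α (rem α t n) n : ℝ) * p α (n + 1)
          ≤ rem α t n / p α (n + 1) * p α (n + 1) :=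
        mul_le_mul_of_nonneg_right hd hppos.le
      rw [div_mul_cancel₀ _ hppos.ne'] at hmul
      show 0 ≤ rem α t n - (dig α (rem α t n) n : ℝ) * p α (n + 1)
      linarith
    · show rem α t n - (dig α (rem α t n) n : ℝ) * p α (n + 1) ≤ p α (n + 1)
      rcases min_cases (⌊rem α t n / p α (n + 1)⌋₊) ((α n : ℕ) - 1) with hmin | hmin
      · have hfl : rem α t n / p α (n + 1) < (⌊rem α t n / p α (n + 1)⌋₊ : ℝ) + 1 :=
          Nat.lt_floor_add_one _
        have : rem α t n < ((⌊rem α t n / p α (n + 1)⌋₊ : ℝ) + 1) * p α (n + 1) := by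
          rw [← div_lt_iff₀ hppos] at *
          exact hfl
        rw [dig, hmin.1]
        nlinarith
      · have hge : ((α n : ℕ) - 1 : ℕ) ≤ ⌊rem α t n / p α (n + 1)⌋₊ := hmin.2.le
        rw [dig, hmin.1]
        have hcast : (((α n : ℕ) - 1 : ℕ) : ℝ) = ((α n : ℕ) : ℝ) - 1 := by
          rw [Nat.cast_sub (α n).pos, Nat.cast_one]
        rw [hcast]
        have hpm := p_mul α n
        nlinarith

theorem partial_sum_digits {t : ℝ} (m : ℕ) :
    ∑ i ∈ Finset.range m, (((digits α t i : ℕ) : ℝ)) * p α (i + 1) = t - rem α t m := by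
  induction m with
  | zero => simp [rem]
  | succ m ih =>
    rw [Finset.sum_range_succ, ih]
    show t - rem α t m + (dig α (rem α t m) m : ℝ) * p α (m + 1)
        = t - (rem α t m - (dig α (rem α t m) m : ℝ) * p α (m + 1))
    ring

theorem f_digits (hp : Filter.Tendsto (p α) Filter.atTop (nhds 0)) {t : ℝ}
    (ht0 : 0 ≤ t) (ht1 : t ≤ 1) : f α (digits α t) = t := by
  have hrem : Filter.Tendsto (fun m => rem α t m) Filter.atTop (nhds 0) := by
    apply squeeze_zero (fun m => (rem_mem α ht0 ht1 m).1) (fun m => (rem_mem α ht0 ht1 m).2) hp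
  have hsum : HasSum (fun i => ((digits α t i : ℕ) : ℝ) * p α (i + 1)) t := by
    rw [hasSum_iff_tendsto_nat_of_nonneg (term_nonneg α (digits α t))]
    have : (fun m => ∑ i ∈ Finset.range m, ((digits α t i : ℕ) : ℝ) * p α (i + 1))
        = fun m => t - rem α t m := by
      funext m
      exact partial_sum_digits α m
    rw [this]
    simpa using Filter.Tendsto.const_sub t hrem
  exact hsum.tsum_eq

end Statement10Aux

/-- If `α = (n_i)` is a sequence of positive integers with `n_i ≥ 2`
for infinitely many `i`, then `dim_H Σ_α = 1` and `H¹(Σ_α) = 1`. -/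
theorem statement_10 (α : ℕ → ℕ+) (hα : ∀ N : ℕ, ∃ i, N ≤ i ∧ 2 ≤ (α i : ℕ)) :
    dimH (Set.univ : Set (PiSeq α)) = 1 ∧ μH[1] (Set.univ : Set (PiSeq α)) = 1 := by
  classical
  have hp := Statement10Aux.tendsto_p α hα
  -- upper bound: μH[1] univ ≤ 1
  have hupper : μH[1] (Set.univ : Set (PiSeq α)) ≤ 1 := by
    set cyl : ∀ n : ℕ, (∀ i : Fin n, Fin (α i)) → Set (PiSeq α) :=
      fun n w => {x : PiSeq α | ∀ i : Fin n, x i = w i} with hcyl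
    have hr0 : Filter.Tendsto (fun n => ENNReal.ofReal (Statement10Aux.p α n))
        Filter.atTop (nhds 0) := by
      simpa using ENNReal.tendsto_ofReal hp
    have hdiam : ∀ n : ℕ, ∀ w, EMetric.diam (cyl n w) ≤ ENNReal.ofReal (Statement10Aux.p α n) := by
      intro n w
      apply EMetric.diam_le
      intro x hx y hy
      rw [edist_dist]
      apply ENNReal.ofReal_le_ofReal
      have : ∀ i < n, x i = y i := by
        intro i hi
        exact (hx ⟨i, hi⟩).trans (hy ⟨i, hi⟩).symm
      exact PiSeq.sdist_le_of_agree this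
    have hcover : ∀ n : ℕ, (Set.univ : Set (PiSeq α)) ⊆ ⋃ w, cyl n w := by
      intro n x _
      exact Set.mem_iUnion.2 ⟨fun i => x i, fun i => rfl⟩
    have hle := MeasureTheory.Measure.hausdorffMeasure_le_liminf_sum 1 (Set.univ : Set (PiSeq α))
      (fun n => ENNReal.ofReal (Statement10Aux.p α n)) hr0 cyl
      (Filter.Eventually.of_forall hdiam) (Filter.Eventually.of_forall hcover)
    refine hle.trans ?_
    have hsum_le : ∀ n : ℕ, ∑ w, EMetric.diam (cyl n w) ^ (1:ℝ) ≤ 1 := by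
      intro n
      have h1 : ∑ w, EMetric.diam (cyl n w) ^ (1:ℝ)
          ≤ ∑ _w : (∀ i : Fin n, Fin (α i)), ENNReal.ofReal (Statement10Aux.p α n) := by
        apply Finset.sum_le_sum
        intro w _
        rw [ENNReal.rpow_one]
        exact hdiam n w
      refine h1.trans ?_
      rw [Finset.sum_const, Finset.card_univ, nsmul_eq_mul]
      have hcard : (Fintype.card (∀ i : Fin n, Fin (α i)) : ℝ)
          = ∏ i ∈ Finset.range n, ((α i : ℕ) : ℝ) := by
        rw [Fintype.card_pi]
        simp only [Fintype.card_fin]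
        rw [← Fin.prod_univ_eq_prod_range (fun i => ((α i : ℕ) : ℝ)) n]
        push_cast
        rfl
      have hprod : (Fintype.card (∀ i : Fin n, Fin (α i)) : ℝ) * Statement10Aux.p α n = 1 := by
        rw [hcard, Statement10Aux.p, ← Finset.prod_mul_distrib]
        apply Finset.prod_eq_one
        intro i _
        exact mul_inv_cancel₀ (Statement10Aux.apos α i).ne'
      calc (Fintype.card (∀ i : Fin n, Fin (α i)) : ℝ≥0∞)
            * ENNReal.ofReal (Statement10Aux.p α n)
          = ENNReal.ofReal ((Fintype.card (∀ i : Fin n, Fin (α i)) : ℝ)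
            * Statement10Aux.p α n) := by
            rw [ENNReal.ofReal_mul (Nat.cast_nonneg _), ENNReal.ofReal_natCast]
        _ = 1 := by rw [hprod]; simp
        _ ≤ 1 := le_rfl
    exact Filter.liminf_le_of_frequently_le
      (Filter.Eventually.frequently (Filter.Eventually.of_forall hsum_le))
  -- lower bound: 1 ≤ μH[1] univ via the Lipschitz map f
  have hlip : LipschitzWith 1 (Statement10Aux.f α) := by
    apply LipschitzWith.of_dist_le_mul
    intro x y
    rw [NNReal.coe_one, one_mul]
    exact Statement10Aux.f_dist α hp x y
  have hsurj : Set.Icc (0:ℝ) 1 ⊆ Statement10Aux.f α '' Set.univ := by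
    rintro t ⟨ht0, ht1⟩
    exact ⟨Statement10Aux.digits α t, Set.mem_univ _, Statement10Aux.f_digits α hp ht0 ht1⟩
  have hlower : 1 ≤ μH[1] (Set.univ : Set (PiSeq α)) := by
    calc (1:ℝ≥0∞) = μH[1] (Set.Icc (0:ℝ) 1) := by
          rw [MeasureTheory.hausdorffMeasure_real]
          simp [Real.volume_Icc]
      _ ≤ μH[1] (Statement10Aux.f α '' Set.univ) := measure_mono hsurj
      _ ≤ (1:ℝ≥0∞) ^ (1:ℝ) * μH[1] (Set.univ : Set (PiSeq α)) := by
          simpa using hlip.hausdorffMeasure_image_le zero_le_one Set.univ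
      _ = μH[1] (Set.univ : Set (PiSeq α)) := by simp
  have hmeas : μH[1] (Set.univ : Set (PiSeq α)) = 1 := le_antisymm hupper hlower
  refine ⟨?_, hmeas⟩
  have h1 : dimH (Set.univ : Set (PiSeq α)) ≤ ((1:ℝ≥0) : ℝ≥0∞) := by
    apply dimH_le_of_hausdorffMeasure_ne_top (d := 1)
    simp only [NNReal.coe_one]
    rw [hmeas]
    exact ENNReal.one_ne_top
  have h2 : ((1:ℝ≥0) : ℝ≥0∞) ≤ dimH (Set.univ : Set (PiSeq α)) := by
    apply le_dimH_of_hausdorffMeasure_ne_zero (d := 1)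
    simp only [NNReal.coe_one]
    rw [hmeas]
    exact one_ne_zero
  simpa using le_antisymm h1 h2


end
end

section
/- Let K ≥ 2, m ≥ 2, and let 𝒦 = (K_0,…,K_{m−1}) be a partition of {0,…,K−1} into nonempty sets. Let E = sup_{n≥1} |ε_n|, where ε_n = ln n! − (n ln n − n + ln√(2πn)) (by Stirling's formula ε_n → 0, so E < ∞). Then for every n ≥ 1 and every p ∈ Q_{m,n}: |(1/n)·ln a_{𝒦,p,n} − f_𝒦(p)| ≤ (m+1)(ln√(2πn) + E)/n. In particular, sup{|(1/n)·ln a_{𝒦,p,n} − f_𝒦(p)| : p ∈ Q_{m,n}} → 0 as n → ∞. -/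
open Filter Set Real

noncomputable section

/-- The entropy-like function
`f_𝒦(p) = ∑_{0≤i<m} −p_i ln(p_i / #(K_i))` (with `0·ln 0 = 0`; note `Real.log 0 = 0`). -/
def fK {K m : ℕ} (𝒦 : Fin m → Finset (Fin K)) (p : Fin m → ℝ) : ℝ :=
  ∑ i, -(p i * Real.log (p i / (𝒦 i).card))

/-- `a_{𝒦,p,n}`: the number of words `ω ∈ {0,…,K−1}^n` whose frequency vector on the
partition `𝒦` equals `p`. -/
def aKpn {K m : ℕ} (𝒦 : Fin m → Finset (Fin K)) (n : ℕ) (p : Fin m → ℝ) : ℕ :=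
  Nat.card {ω : Fin n → Fin K |
    ∀ i, (((Finset.univ.filter (fun j => ω j ∈ 𝒦 i)).card : ℝ)) = n * p i}

/-- The error term `ε_n` in Stirling's formula
`ln n! = n ln n − n + ln √(2πn) + ε_n`. -/
def epsStirling (n : ℕ) : ℝ :=
  Real.log (Nat.factorial n) - ((n : ℝ) * Real.log n - n + Real.log (Real.sqrt (2 * π * n)))

/-- `E = sup_n |ε_n|`. -/
def Econst : ℝ := ⨆ n : ℕ, |epsStirling n|

section AuxiliaryLemmas
open Finset

-- card of subtype-filter equals card of finset-filter
private lemma card_filter_coe {α : Type*} [Fintype α] [DecidableEq α] (s : Finset α)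
    (q : α → Prop) [DecidablePred q] :
    #(Finset.univ.filter (fun x : {a // a ∈ s} => q ↑x)) = #(s.filter q) := by
  rw [Finset.univ_eq_attach, Finset.filter_attach, Finset.card_map, Finset.card_attach]

private lemma card_fiber_maps {β : Type*} [Fintype β] [DecidableEq β] (s : Finset β) :
    ∀ (k : β → ℕ) (α : Type) [Fintype α] [DecidableEq α],
      Fintype.card α = ∑ b ∈ s, k b →
      #(Finset.univ.filter (fun g : α → β =>
        (∀ a, g a ∈ s) ∧ ∀ b ∈ s, #(Finset.univ.filter (fun a => g a = b)) = k b))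
        = Nat.multinomial s k := by
  classical
  induction s using Finset.induction_on with
  | empty =>
    intro k α _ _ hcard
    have hemp : IsEmpty α := Fintype.card_eq_zero_iff.mp (by simpa using hcard)
    rw [Finset.filter_true_of_mem (fun g _ => ⟨fun a => hemp.elim a, fun b hb => by simp at hb⟩)]
    simp [Finset.card_univ, Fintype.card_fun, hcard]
  | @insert b s' hbs ih =>
    intro k α _ _ hcard
    rw [Finset.sum_insert hbs] at hcard
    set P : (α → β) → Prop := fun g =>
      (∀ a, g a ∈ insert b s') ∧ ∀ c ∈ insert b s', #(Finset.univ.filter (fun a => g a = c)) = k c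
      with hP
    have hmaps : ∀ g ∈ Finset.univ.filter P,
        (Finset.univ.filter (fun a => g a = b)) ∈ Finset.univ.powersetCard (k b) := by
      intro g hg
      simp only [Finset.mem_filter, hP] at hg
      rw [Finset.mem_powersetCard]
      exact ⟨Finset.subset_univ _, hg.2.2 b (Finset.mem_insert_self _ _)⟩
    rw [Finset.card_eq_sum_card_fiberwise hmaps]
    have hinner : ∀ T ∈ Finset.univ.powersetCard (k b),
        #((Finset.univ.filter P).filter
            (fun g => Finset.univ.filter (fun a => g a = b) = T)) = Nat.multinomial s' k := by
      intro T hT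
      rw [Finset.mem_powersetCard] at hT
      have hcardT : Fintype.card {a // a ∈ Tᶜ} = ∑ c ∈ s', k c := by
        rw [Fintype.card_coe, Finset.card_compl, hT.2, hcard, Nat.add_sub_cancel_left]
      rw [← ih k {a // a ∈ (Tᶜ : Finset α)} hcardT]
      -- bijection
      apply Finset.card_bij' (i := fun g _ => fun x : {a // a ∈ (Tᶜ : Finset α)} => g ↑x)
        (j := fun g' _ => fun a => if h : a ∈ (Tᶜ : Finset α) then g' ⟨a, h⟩ else b)
      · -- i maps into target
        intro g hg
        simp only [Finset.mem_filter, hP] at hg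
        obtain ⟨⟨-, h1, h2⟩, hfib⟩ := hg
        rw [Finset.mem_filter]
        refine ⟨Finset.mem_univ _, ?_, ?_⟩
        · intro x
          have hx : (x : α) ∉ T := by
            have := x.2; rwa [Finset.mem_compl] at this
          have := h1 x
          rcases Finset.mem_insert.mp this with h | h
          · exfalso
            apply hx
            have hmem : (x : α) ∈ Finset.univ.filter (fun a => g a = b) :=
              Finset.mem_filter.mpr ⟨Finset.mem_univ _, h⟩
            rwa [hfib] at hmem
          · exact h
        · intro c hc
          refine (card_filter_coe Tᶜ (fun a => g a = c)).trans ?_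
          have : Tᶜ.filter (fun a => g a = c) = Finset.univ.filter (fun a => g a = c) := by
            ext a
            simp only [Finset.mem_filter, Finset.mem_compl, Finset.mem_univ, true_and]
            constructor
            · rintro ⟨-, h⟩; exact h
            · intro h
              refine ⟨?_, h⟩
              intro haT
              rw [← hfib, Finset.mem_filter] at haT
              rw [h] at haT
              exact hbs (haT.2 ▸ hc)
          rw [this, h2 c (Finset.mem_insert_of_mem hc)]
      · -- j maps into source
        intro g' hg'
        rw [Finset.mem_filter] at hg'
        obtain ⟨-, h1, h2⟩ := hg'
        have hfib : Finset.univ.filter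
            (fun a => (if h : a ∈ (Tᶜ : Finset α) then g' ⟨a, h⟩ else b) = b) = T := by
          ext a
          simp only [Finset.mem_filter, Finset.mem_univ, true_and]
          split_ifs with h
          · rw [Finset.mem_compl] at h
            constructor
            · intro hc; exact absurd (hc ▸ h1 ⟨a, by simpa using h⟩) hbs
            · intro hc; exact absurd hc h
          · rw [Finset.mem_compl, not_not] at h
            simp [h]
        refine Finset.mem_filter.mpr ⟨Finset.mem_filter.mpr ⟨Finset.mem_univ _, ?_⟩, hfib⟩
        rw [hP]
        refine ⟨?_, ?_⟩
        · intro a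
          by_cases h : a ∈ (Tᶜ : Finset α)
          · simp only [h, dif_pos]
            exact Finset.mem_insert_of_mem (h1 _)
          · simp only [h, dif_neg, not_false_iff]
            exact Finset.mem_insert_self _ _
        · intro c hc
          rcases Finset.mem_insert.mp hc with rfl | hc'
          · rw [hfib]; exact hT.2
          · have e1 : Finset.univ.filter
                (fun a => (if h : a ∈ (Tᶜ : Finset α) then g' ⟨a, h⟩ else b) = c)
                = (Tᶜ.filter (fun a => (if h : a ∈ (Tᶜ : Finset α) then g' ⟨a, h⟩ else b) = c)) := by
              ext a
              simp only [Finset.mem_filter, Finset.mem_univ, true_and]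
              constructor
              · intro h
                refine ⟨?_, h⟩
                by_contra hmem
                rw [dif_neg hmem] at h
                exact hbs (h ▸ hc')
              · exact fun h => h.2
            rw [e1]
            refine ((card_filter_coe Tᶜ
              (fun a => (if h : a ∈ (Tᶜ : Finset α) then g' ⟨a, h⟩ else b) = c)).symm).trans ?_
            rw [← h2 c hc']
            congr 1
            apply Finset.filter_congr
            intro x _
            rw [dif_pos x.2]
      · -- left inverse
        intro g hg
        rw [Finset.mem_filter] at hg
        funext a
        show (if h : a ∈ (Tᶜ : Finset α) then g ↑(⟨a, h⟩ : {a // a ∈ (Tᶜ : Finset α)}) else b) = g a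
        by_cases h : a ∈ (Tᶜ : Finset α)
        · rw [dif_pos h]
        · rw [dif_neg h]
          rw [Finset.mem_compl, not_not] at h
          have := hg.2
          rw [← this, Finset.mem_filter] at h
          exact h.2.symm
      · -- right inverse
        intro g' hg'
        funext x
        have h : (x : α) ∈ (Tᶜ : Finset α) := x.2
        show (if h : (x : α) ∈ (Tᶜ : Finset α) then g' ⟨↑x, h⟩ else b) = g' x
        rw [dif_pos h]
    rw [Finset.sum_congr rfl hinner, Finset.sum_const, Finset.card_powersetCard,
      Finset.card_univ, Nat.multinomial_insert hbs, hcard, smul_eq_mul]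

private lemma card_words {K m : ℕ} (𝒦 : Fin m → Finset (Fin K)) (hne : ∀ i, (𝒦 i).Nonempty)
    (hdisj : ∀ i j, i ≠ j → Disjoint (𝒦 i) (𝒦 j)) (hcover : ∀ a : Fin K, ∃ i, a ∈ 𝒦 i)
    (n : ℕ) (k : Fin m → ℕ) (hsum : ∑ i, k i = n) :
    Nat.card {ω : Fin n → Fin K |
        ∀ i, #(Finset.univ.filter (fun j => ω j ∈ 𝒦 i)) = k i}
      = Nat.multinomial Finset.univ k * ∏ i, (𝒦 i).card ^ k i := by
  classical
  -- classification map
  choose χ hχ using hcover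
  have huniq : ∀ a i, a ∈ 𝒦 i → χ a = i := by
    intro a i hai
    by_contra hne'
    have := (hdisj _ _ hne').le_bot (Finset.mem_inter.mpr ⟨hχ a, hai⟩)
    simp at this
  have hmem_iff : ∀ (a : Fin K) (i : Fin m), a ∈ 𝒦 i ↔ χ a = i := by
    intro a i
    exact ⟨huniq a i, fun h => h ▸ hχ a⟩
  -- convert Nat.card to Finset card
  rw [Nat.card_eq_fintype_card, Fintype.card_of_subtype
    (Finset.univ.filter (fun ω : Fin n → Fin K =>
      ∀ i, #(Finset.univ.filter (fun j => ω j ∈ 𝒦 i)) = k i))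
    (by intro ω; simp)]
  -- fiberwise over χ ∘ ω
  set S : Finset (Fin n → Fin m) := Finset.univ.filter
    (fun g : Fin n → Fin m => (∀ j, g j ∈ Finset.univ) ∧
      ∀ i ∈ Finset.univ, #(Finset.univ.filter (fun j => g j = i)) = k i) with hS
  have hmaps : ∀ ω ∈ Finset.univ.filter (fun ω : Fin n → Fin K =>
      ∀ i, #(Finset.univ.filter (fun j => ω j ∈ 𝒦 i)) = k i), (fun j => χ (ω j)) ∈ S := by
    intro ω hω
    rw [Finset.mem_filter] at hω
    rw [hS, Finset.mem_filter]
    refine ⟨Finset.mem_univ _, fun j => Finset.mem_univ _, fun i _ => ?_⟩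
    rw [← hω.2 i]
    congr 1
    apply Finset.filter_congr
    intro j _
    exact (hmem_iff (ω j) i).symm
  rw [Finset.card_eq_sum_card_fiberwise hmaps]
  have hfiber : ∀ g ∈ S,
      #((Finset.univ.filter (fun ω : Fin n → Fin K =>
          ∀ i, #(Finset.univ.filter (fun j => ω j ∈ 𝒦 i)) = k i)).filter
        (fun ω => (fun j => χ (ω j)) = g)) = ∏ i, (𝒦 i).card ^ k i := by
    intro g hg
    rw [hS, Finset.mem_filter] at hg
    obtain ⟨-, -, hgk⟩ := hg
    have hpi : ((Finset.univ.filter (fun ω : Fin n → Fin K =>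
          ∀ i, #(Finset.univ.filter (fun j => ω j ∈ 𝒦 i)) = k i)).filter
        (fun ω => (fun j => χ (ω j)) = g)) = Fintype.piFinset (fun j => 𝒦 (g j)) := by
      ext ω
      simp only [Finset.mem_filter, Finset.mem_univ, true_and, Fintype.mem_piFinset]
      constructor
      · rintro ⟨-, hχω⟩
        intro j
        rw [hmem_iff]
        exact congrFun hχω j
      · intro hωg
        have hχω : (fun j => χ (ω j)) = g := funext fun j => (hmem_iff (ω j) (g j)).mp (hωg j)
        refine ⟨fun i => ?_, hχω⟩
        rw [← hgk i (Finset.mem_univ i)]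
        congr 1
        apply Finset.filter_congr
        intro j _
        rw [hmem_iff, congrFun hχω j]
      -- done
    rw [hpi, Fintype.card_piFinset]
    -- product over fibers
    rw [← Finset.prod_fiberwise_of_maps_to (fun j _ => Finset.mem_univ (g j))
      (fun j => ((𝒦 (g j)).card : ℕ))]
    refine Finset.prod_congr rfl fun i _ => ?_
    rw [Finset.prod_congr rfl (fun j hj => ?_), Finset.prod_const, hgk i (Finset.mem_univ i)]
    rw [Finset.mem_filter] at hj
    rw [hj.2]
  rw [Finset.sum_congr rfl hfiber, Finset.sum_const, smul_eq_mul]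
  congr 1
  have := card_fiber_maps (Finset.univ : Finset (Fin m)) k (Fin n)
    (by simpa using hsum.symm)
  rw [← this, hS]
  congr 1
  ext g
  simp only [Finset.mem_filter]


end AuxiliaryLemmas

private lemma epsStirling_eq (n : ℕ) (hn : 1 ≤ n) :
    epsStirling n = Real.log (Stirling.stirlingSeq n) - Real.log (Real.sqrt π) := by
  have hn0 : (0 : ℝ) < n := by exact_mod_cast hn
  rw [Stirling.log_stirlingSeq_formula, epsStirling]
  have h1 : Real.log (Real.sqrt (2 * π * n)) =
      Real.log (Real.sqrt π) + 1 / 2 * Real.log (2 * n) := by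
    rw [show 2 * π * (n:ℝ) = π * (2 * n) by ring, Real.sqrt_mul (le_of_lt pi_pos),
      Real.log_mul (by positivity) (by positivity)]
    congr 1
    rw [Real.log_sqrt (by positivity)]
    ring
  have h2 : (n : ℝ) * Real.log ((n : ℝ) / Real.exp 1) = n * Real.log n - n := by
    rw [Real.log_div (ne_of_gt hn0) (by positivity), Real.log_exp]
    ring
  rw [h1, h2]
  ring

private lemma eps_tendsto : Tendsto (fun n => |epsStirling n|) atTop (nhds 0) := by
  have hpos : (0:ℝ) < Real.sqrt π := Real.sqrt_pos.mpr pi_pos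
  have h1 : Tendsto (fun n : ℕ => Real.log (Stirling.stirlingSeq n)) atTop
      (nhds (Real.log (Real.sqrt π))) :=
    ((Real.continuousAt_log (ne_of_gt hpos)).tendsto).comp Stirling.tendsto_stirlingSeq_sqrt_pi
  have h2 : Tendsto (fun n : ℕ => Real.log (Stirling.stirlingSeq n) - Real.log (Real.sqrt π))
      atTop (nhds 0) := by
    simpa using h1.sub (tendsto_const_nhds (x := Real.log (Real.sqrt π)))
  have h3 : Tendsto epsStirling atTop (nhds 0) := by
    apply h2.congr'
    filter_upwards [eventually_ge_atTop 1] with n hn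
    exact (epsStirling_eq n hn).symm
  simpa using h3.abs

private lemma abs_epsStirling_le (j : ℕ) : |epsStirling j| ≤ Econst :=
  le_ciSup (eps_tendsto.isBoundedUnder_le.bddAbove_range) j

private lemma Econst_nonneg : 0 ≤ Econst := (abs_nonneg _).trans (abs_epsStirling_le 0)


/-- Let `K ≥ 2`, `m ≥ 2`, `𝒦 = (K_0,…,K_{m−1})` a partition of
`{0,…,K−1}` into nonempty sets and `E = sup_{n} |ε_n|` as above. Then for every
`n ≥ 1` and every `p ∈ Q_{m,n}`:
`|(1/n)·ln a_{𝒦,p,n} − f_𝒦(p)| ≤ (m+1)(ln √(2πn) + E)/n`; in particular the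
left-hand side tends to `0` uniformly in `p ∈ Q_{m,n}` as `n → ∞`. -/
theorem statement_14 (K m : ℕ) (hK : 2 ≤ K) (hm : 2 ≤ m)
    (𝒦 : Fin m → Finset (Fin K)) (hne : ∀ i, (𝒦 i).Nonempty)
    (hdisj : ∀ i j, i ≠ j → Disjoint (𝒦 i) (𝒦 j))
    (hcover : ∀ a : Fin K, ∃ i, a ∈ 𝒦 i) :
    (∀ n : ℕ, 1 ≤ n → ∀ p : Fin m → ℝ,
      (∀ i, 0 ≤ p i ∧ p i ≤ 1) → (∑ i, p i) = 1 → (∀ i, ∃ k : ℕ, (n : ℝ) * p i = k) →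
      |(1 / n : ℝ) * Real.log (aKpn 𝒦 n p) - fK 𝒦 p| ≤
        (m + 1) * (Real.log (Real.sqrt (2 * π * n)) + Econst) / n) ∧
    (∀ δ : ℝ, 0 < δ → ∃ N : ℕ, ∀ n : ℕ, N ≤ n → 1 ≤ n → ∀ p : Fin m → ℝ,
      (∀ i, 0 ≤ p i ∧ p i ≤ 1) → (∑ i, p i) = 1 → (∀ i, ∃ k : ℕ, (n : ℝ) * p i = k) →
      |(1 / n : ℝ) * Real.log (aKpn 𝒦 n p) - fK 𝒦 p| < δ) := by
  classical
  have hLnonneg : ∀ j : ℕ, 0 ≤ Real.log (Real.sqrt (2 * π * j)) := by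
    intro j
    rcases Nat.eq_zero_or_pos j with rfl | hj
    · simp
    · apply Real.log_nonneg
      rw [show (1:ℝ) = Real.sqrt 1 from (Real.sqrt_one).symm]
      apply Real.sqrt_le_sqrt
      have h1 : (1:ℝ) ≤ j := by exact_mod_cast hj
      nlinarith [pi_gt_three]
  have hLmono : ∀ j n : ℕ, j ≤ n →
      Real.log (Real.sqrt (2*π*j)) ≤ Real.log (Real.sqrt (2*π*n)) := by
    intro j n hjn
    rcases Nat.eq_zero_or_pos j with rfl | hj
    · simpa using hLnonneg n
    · have hj1 : (1:ℝ) ≤ j := by exact_mod_cast hj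
      have hjn' : (j:ℝ) ≤ n := by exact_mod_cast hjn
      apply Real.log_le_log (by positivity)
      apply Real.sqrt_le_sqrt
      nlinarith [pi_pos]
  have main : ∀ n : ℕ, 1 ≤ n → ∀ p : Fin m → ℝ,
      (∀ i, 0 ≤ p i ∧ p i ≤ 1) → (∑ i, p i) = 1 → (∀ i, ∃ k : ℕ, (n : ℝ) * p i = k) →
      |(1 / n : ℝ) * Real.log (aKpn 𝒦 n p) - fK 𝒦 p| ≤
        (m + 1) * (Real.log (Real.sqrt (2 * π * n)) + Econst) / n := by
    intro n hn p hp01 hpsum hpnat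
    have hn0 : (0:ℝ) < n := by exact_mod_cast hn
    choose k hk using hpnat
    have hsumkR : ∑ i, (k i : ℝ) = (n : ℝ) := by
      rw [Finset.sum_congr rfl (fun i _ => (hk i).symm), ← Finset.mul_sum, hpsum, mul_one]
    have hsumk : ∑ i, k i = n := by exact_mod_cast (by push_cast; exact hsumkR : ((∑ i, k i : ℕ):ℝ) = n)
    have hki_le : ∀ i, k i ≤ n := by
      intro i
      have h1 : (k i : ℝ) ≤ n := by
        rw [← hk i]
        nlinarith [(hp01 i).2, hn0]
      exact_mod_cast h1
    have hcpos : ∀ i, (0:ℝ) < ((𝒦 i).card : ℝ) := fun i => by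
      exact_mod_cast Finset.card_pos.mpr (hne i)
    have haval : aKpn 𝒦 n p = Nat.multinomial Finset.univ k * ∏ i, (𝒦 i).card ^ k i := by
      rw [aKpn, show {ω : Fin n → Fin K |
            ∀ i, (((Finset.univ.filter (fun j => ω j ∈ 𝒦 i)).card : ℝ)) = n * p i}
          = {ω : Fin n → Fin K |
            ∀ i, (Finset.univ.filter (fun j => ω j ∈ 𝒦 i)).card = k i} from by
        ext ω
        simp only [Set.mem_setOf_eq]
        refine forall_congr' fun i => ?_
        rw [hk i, Nat.cast_inj]]
      exact card_words 𝒦 hne hdisj hcover n k hsumk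
    have hmpos : (0:ℝ) < (Nat.multinomial Finset.univ k : ℝ) := by
      exact_mod_cast Nat.multinomial_pos _ _
    have hloga : Real.log (aKpn 𝒦 n p) =
        Real.log (Nat.multinomial Finset.univ k)
          + ∑ i, (k i : ℝ) * Real.log ((𝒦 i).card) := by
      rw [haval]
      push_cast
      rw [Real.log_mul (ne_of_gt hmpos)
        (Finset.prod_ne_zero_iff.mpr fun i _ => pow_ne_zero _ (ne_of_gt (hcpos i))),
        Real.log_prod (fun i _ => pow_ne_zero _ (ne_of_gt (hcpos i)))]
      congr 1
      exact Finset.sum_congr rfl fun i _ => by rw [Real.log_pow]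
    have hlogmult : Real.log (Nat.multinomial Finset.univ k) =
        Real.log (Nat.factorial n) - ∑ i, Real.log (Nat.factorial (k i)) := by
      have hspec := Nat.multinomial_spec Finset.univ k
      rw [hsumk] at hspec
      have hcast : (∏ i, (Nat.factorial (k i) : ℝ)) * (Nat.multinomial Finset.univ k : ℝ)
          = (Nat.factorial n : ℝ) := by
        rw [← Nat.cast_prod, ← Nat.cast_mul, hspec]
      have hlog := congrArg Real.log hcast
      rw [Real.log_mul
          (Finset.prod_ne_zero_iff.mpr fun i _ => by
            exact_mod_cast (Nat.factorial_pos _).ne')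
          (ne_of_gt hmpos),
        Real.log_prod (fun i _ => by exact_mod_cast (Nat.factorial_pos _).ne')] at hlog
      linarith [hlog]
    have hfac : ∀ j : ℕ, Real.log (Nat.factorial j)
        = (j:ℝ) * Real.log j - j + Real.log (Real.sqrt (2*π*j)) + epsStirling j := by
      intro j; unfold epsStirling; ring
    have hfK : (n:ℝ) * fK 𝒦 p = (n:ℝ) * Real.log n - ∑ i, (k i:ℝ) * Real.log (k i)
        + ∑ i, (k i:ℝ) * Real.log ((𝒦 i).card) := by
      unfold fK
      rw [Finset.mul_sum]
      have hterm : ∀ i ∈ Finset.univ, (n:ℝ) * -(p i * Real.log (p i / ((𝒦 i).card)))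
          = (k i:ℝ) * Real.log n - (k i:ℝ) * Real.log (k i)
            + (k i:ℝ) * Real.log ((𝒦 i).card) := by
        intro i _
        rcases Nat.eq_zero_or_pos (k i) with h0 | hpos
        · have hp0 : p i = 0 := by
            have h1 := hk i
            rw [h0] at h1
            push_cast at h1
            exact (mul_eq_zero.mp h1).resolve_left (ne_of_gt hn0)
          simp [hp0, h0]
        · have hkpos : (0:ℝ) < (k i : ℝ) := by exact_mod_cast hpos
          have hpeq : p i = (k i:ℝ) / n := by
            field_simp
            rw [mul_comm]
            exact hk i
          have hppos : 0 < p i := by rw [hpeq]; positivity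
          rw [hpeq, show (k i:ℝ) / n / ((𝒦 i).card : ℝ) = (k i:ℝ) / ((n:ℝ) * ((𝒦 i).card)) from by
            field_simp]
          rw [Real.log_div (ne_of_gt hkpos) (by positivity),
            Real.log_mul (ne_of_gt hn0) (ne_of_gt (hcpos i))]
          field_simp
          ring
      rw [Finset.sum_congr rfl hterm, Finset.sum_add_distrib, Finset.sum_sub_distrib,
        ← Finset.sum_mul, hsumkR]
    have hkey : Real.log (aKpn 𝒦 n p) - (n:ℝ) * fK 𝒦 p
        = Real.log (Real.sqrt (2*π*n)) + epsStirling n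
          - ∑ i, (Real.log (Real.sqrt (2*π*(k i))) + epsStirling (k i)) := by
      rw [hloga, hlogmult, hfK, hfac n,
        Finset.sum_congr rfl (fun i (_ : i ∈ Finset.univ) => hfac (k i))]
      have hsplit : ∑ i, ((k i:ℝ) * Real.log (k i) - (k i:ℝ)
            + Real.log (Real.sqrt (2*π*(k i))) + epsStirling (k i))
          = (∑ i, (k i:ℝ) * Real.log (k i)) - (n:ℝ)
            + ∑ i, (Real.log (Real.sqrt (2*π*(k i))) + epsStirling (k i)) := by
        rw [Finset.sum_add_distrib, Finset.sum_add_distrib, Finset.sum_sub_distrib, hsumkR,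
          Finset.sum_add_distrib]
        ring
      rw [hsplit]
      ring
    have habs : |Real.log (aKpn 𝒦 n p) - (n:ℝ) * fK 𝒦 p|
        ≤ (m+1) * (Real.log (Real.sqrt (2*π*n)) + Econst) := by
      rw [hkey]
      have hbnd : ∀ j : ℕ, j ≤ n → |Real.log (Real.sqrt (2*π*j)) + epsStirling j|
          ≤ Real.log (Real.sqrt (2*π*n)) + Econst := by
        intro j hj
        calc |Real.log (Real.sqrt (2*π*j)) + epsStirling j|
            ≤ |Real.log (Real.sqrt (2*π*j))| + |epsStirling j| := abs_add_le _ _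
          _ ≤ Real.log (Real.sqrt (2*π*n)) + Econst := by
              apply add_le_add _ (abs_epsStirling_le j)
              rw [abs_of_nonneg (hLnonneg j)]
              exact hLmono j n hj
      calc |Real.log (Real.sqrt (2*π*n)) + epsStirling n
            - ∑ i, (Real.log (Real.sqrt (2*π*(k i))) + epsStirling (k i))|
          ≤ |Real.log (Real.sqrt (2*π*n)) + epsStirling n|
            + |∑ i, (Real.log (Real.sqrt (2*π*(k i))) + epsStirling (k i))| := abs_sub _ _
        _ ≤ (Real.log (Real.sqrt (2*π*n)) + Econst)
            + ∑ i, |Real.log (Real.sqrt (2*π*(k i))) + epsStirling (k i)| :=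
              add_le_add (hbnd n le_rfl) (Finset.abs_sum_le_sum_abs _ _)
        _ ≤ (Real.log (Real.sqrt (2*π*n)) + Econst)
            + ∑ _i : Fin m, (Real.log (Real.sqrt (2*π*n)) + Econst) := by
              apply add_le_add (le_refl _)
              exact Finset.sum_le_sum fun i _ => hbnd (k i) (hki_le i)
        _ = (m+1) * (Real.log (Real.sqrt (2*π*n)) + Econst) := by
              rw [Finset.sum_const, Finset.card_univ, Fintype.card_fin, nsmul_eq_mul]
              ring
    have heq : (1 / n : ℝ) * Real.log (aKpn 𝒦 n p) - fK 𝒦 p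
        = (Real.log (aKpn 𝒦 n p) - (n:ℝ) * fK 𝒦 p) / n := by
      field_simp
    rw [heq, abs_div, abs_of_pos hn0]
    gcongr
  refine ⟨main, ?_⟩
  intro δ hδ
  have hlog0 : Tendsto (fun x : ℝ => Real.log x / x) atTop (nhds 0) :=
    Real.isLittleO_log_id_atTop.tendsto_div_nhds_zero
  have h2pi : (0:ℝ) < 2 * π := by positivity
  have hcomp : Tendsto (fun x : ℝ => Real.log (2*π*x) / (2*π*x)) atTop (nhds 0) :=
    hlog0.comp (Tendsto.const_mul_atTop h2pi tendsto_id)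
  have hlogx : Tendsto (fun x : ℝ => Real.log (2*π*x) / x) atTop (nhds 0) := by
    have := hcomp.mul_const (2*π)
    rw [zero_mul] at this
    apply this.congr'
    filter_upwards [eventually_gt_atTop (0:ℝ)] with x hx
    field_simp
  have hlogn : Tendsto (fun n : ℕ => Real.log (2*π*n) / n) atTop (nhds 0) :=
    hlogx.comp tendsto_natCast_atTop_atTop
  have hinv : Tendsto (fun n : ℕ => (1:ℝ) / n) atTop (nhds 0) :=
    tendsto_one_div_atTop_nhds_zero_nat
  have hB : Tendsto (fun n : ℕ =>
      (m + 1) * (Real.log (Real.sqrt (2 * π * n)) + Econst) / n) atTop (nhds 0) := by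
    have h1 := (hlogn.const_mul ((m+1)/2 : ℝ)).add (hinv.const_mul ((m+1) * Econst))
    rw [mul_zero, mul_zero, add_zero] at h1
    apply h1.congr'
    filter_upwards [eventually_ge_atTop 1] with n hn
    have hn0 : (0:ℝ) < n := by exact_mod_cast hn
    rw [Real.log_sqrt (by positivity)]
    field_simp
  obtain ⟨N, hN⟩ := Filter.eventually_atTop.mp (hB.eventually (gt_mem_nhds hδ))
  refine ⟨N, fun n hNn hn p hp01 hpsum hpnat => ?_⟩
  exact lt_of_le_of_lt (main n hn p hp01 hpsum hpnat) (hN n hNn)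


end
end

section
/- Let N ⊆ ℕ with both N and its complement N^c infinite, and write N as the disjoint union of its maximal integer intervals [t_{N,2j}, t_{N,2j+1}) ∩ ℕ, j ≥ 0, where t_{N,0} < t_{N,1} < t_{N,2} < ⋯, and set e_{N,i} = ζ_{t_{N,i+1}}(N). Then the density spectrum of N equals μ(N) = [liminf_{i→∞} e_{N,2i+1}/t_{N,2i+2}, limsup_{i→∞} e_{N,2i}/t_{N,2i+1}]. -/
open Filter Set

noncomputable section

namespace Stmt16


lemma crossing (f : ℕ → ℝ) (c ε : ℝ) (n1 n2 : ℕ) (h12 : n1 ≤ n2)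
    (h1 : c ≤ f n1) (h2 : f n2 < c)
    (hstep : ∀ k, n1 ≤ k → f k - ε < f (k+1)) :
    ∃ m, n1 ≤ m ∧ m ≤ n2 ∧ c - ε < f m ∧ f m < c := by
  classical
  have hex : ∃ j, f (n1 + j) < c := ⟨n2 - n1, by rwa [Nat.add_sub_cancel' h12]⟩
  obtain ⟨j1, hj⟩ : ∃ j1, Nat.find hex = j1 + 1 := by
    refine ⟨Nat.find hex - 1, ?_⟩
    have h0 : Nat.find hex ≠ 0 := by
      intro h
      have := Nat.find_spec hex
      rw [h] at this; simp at this; linarith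
    omega
  have hspec : f (n1 + (j1 + 1)) < c := by rw [← hj]; exact Nat.find_spec hex
  have hmin : ¬ f (n1 + j1) < c := Nat.find_min hex (by omega)
  have hle : Nat.find hex ≤ n2 - n1 :=
    Nat.find_min' hex (by rwa [Nat.add_sub_cancel' h12])
  refine ⟨n1 + (j1 + 1), Nat.le_add_right _ _, by omega, ?_, hspec⟩
  have := hstep (n1 + j1) (Nat.le_add_right _ _)
  push_neg at hmin
  have heq : n1 + (j1 + 1) = (n1 + j1) + 1 := by omega
  rw [heq]
  linarith

lemma cluster_iff (a : ℕ → ℝ) (r : ℝ) :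
    MapClusterPt r atTop a ↔ ∀ ε > 0, ∃ᶠ n in atTop, |a n - r| < ε := by
  rw [mapClusterPt_iff_frequently]
  constructor
  · intro h ε hε
    have := h (Metric.ball r ε) (Metric.ball_mem_nhds r hε)
    refine this.mono fun n hn => ?_
    simpa [Real.dist_eq] using hn
  · intro h s hs
    obtain ⟨ε, hε, hsub⟩ := Metric.mem_nhds_iff.mp hs
    refine (h ε hε).mono fun n hn => hsub ?_
    simpa [Metric.mem_ball, Real.dist_eq] using hn

lemma clusterSet_eq (a : ℕ → ℝ) (h0 : ∀ n, 0 ≤ a n) (h1 : ∀ n, a n ≤ 1)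
    (hstep : ∀ ε > 0, ∀ᶠ n in atTop, |a (n+1) - a n| < ε) :
    {r : ℝ | MapClusterPt r atTop a} = Icc (liminf a atTop) (limsup a atTop) := by
  have hbdd : IsBoundedUnder (· ≤ ·) atTop a := isBoundedUnder_of ⟨1, h1⟩
  have hbdd' : IsBoundedUnder (· ≥ ·) atTop a := isBoundedUnder_of ⟨0, h0⟩
  have hcob : IsCoboundedUnder (· ≤ ·) atTop a := hbdd'.isCoboundedUnder_le
  have hcob' : IsCoboundedUnder (· ≥ ·) atTop a := hbdd.isCoboundedUnder_ge
  ext r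
  simp only [mem_setOf_eq, mem_Icc, cluster_iff]
  constructor
  · intro h
    constructor
    · -- liminf ≤ r
      by_contra hc
      push_neg at hc
      set ε := (liminf a atTop - r) / 2 with hε
      have hεpos : 0 < ε := by simp [hε]; linarith
      have : liminf a atTop ≤ r + ε := by
        apply liminf_le_of_frequently_le _ hbdd'
        exact (h ε hεpos).mono fun n hn => by
          rw [abs_sub_lt_iff] at hn; linarith [hn.1]
      simp [hε] at this; linarith
    · by_contra hc
      push_neg at hc
      set ε := (r - limsup a atTop) / 2 with hε
      have hεpos : 0 < ε := by simp [hε]; linarith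
      have : r - ε ≤ limsup a atTop := by
        apply le_limsup_of_frequently_le _ hbdd
        exact (h ε hεpos).mono fun n hn => by
          rw [abs_sub_lt_iff] at hn; linarith [hn.2]
      simp [hε] at this; linarith
  · rintro ⟨hL, hU⟩ ε hε
    rw [frequently_atTop]
    intro M
    obtain ⟨N0, hN0⟩ := (eventually_atTop.mp (hstep ε hε))
    set M' := max M N0 with hM'
    -- frequently a n > r - ε
    have hf1 : ∃ᶠ n in atTop, r - ε < a n :=
      frequently_lt_of_lt_limsup hcob (by linarith)
    obtain ⟨n1, hn1M, hn1⟩ := frequently_atTop.mp hf1 M'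
    by_cases hcase : a n1 < r + ε
    · exact ⟨n1, le_trans (le_max_left _ _) hn1M, by rw [abs_sub_lt_iff]; constructor <;> linarith⟩
    · push_neg at hcase
      have hf2 : ∃ᶠ n in atTop, a n < r + ε :=
        frequently_lt_of_liminf_lt hcob' (by linarith)
      obtain ⟨n2, hn2, hn2lt⟩ := frequently_atTop.mp hf2 n1
      obtain ⟨m, hm1, hm2, hm3, hm4⟩ := crossing a (r + ε) ε n1 n2 hn2 hcase hn2lt
        (fun k hk => by
          have := hN0 k (le_trans (le_trans (le_max_right _ _) hn1M) hk)
          rw [abs_sub_lt_iff] at this; linarith [this.2])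
      refine ⟨m, le_trans (le_trans (le_max_left _ _) hn1M) hm1, ?_⟩
      rw [abs_sub_lt_iff]
      constructor <;> linarith



open Classical in
lemma zeta_succ (N : Set ℕ) (n : ℕ) :
    (N ∩ Iio (n+1)).ncard = (N ∩ Iio n).ncard + (if n ∈ N then 1 else 0) := by
  classical
  have hfin : (N ∩ Iio n).Finite := (Set.finite_Iio n).inter_of_right N
  have hIio : Iio (n+1) = insert n (Iio n) := by
    ext k; simp [Nat.lt_succ_iff, Nat.le_iff_lt_or_eq, or_comm]
  by_cases h : n ∈ N
  · have : N ∩ Iio (n+1) = insert n (N ∩ Iio n) := by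
      rw [hIio, Set.inter_insert_of_mem h]
    rw [this, Set.ncard_insert_of_notMem (by simp) hfin]; simp [h]
  · have : N ∩ Iio (n+1) = N ∩ Iio n := by
      rw [hIio, Set.inter_insert_of_notMem h]
    rw [this]; simp [h]

noncomputable def aval (N : Set ℕ) (n : ℕ) : ℝ := ((N ∩ Iio n).ncard : ℝ) / n


variable (N : Set ℕ)

lemma aval_nonneg (n : ℕ) : 0 ≤ aval N n := by unfold aval; positivity

lemma zetaR_le (n : ℕ) : ((N ∩ Iio n).ncard : ℝ) ≤ n := by
  exact_mod_cast Set.ncard_le_ncard (Set.inter_subset_right) (Set.finite_Iio n)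
    |>.trans_eq (by rw [← Finset.coe_Iio, Set.ncard_coe_finset, Nat.card_Iio])

lemma aval_le_one (n : ℕ) : aval N n ≤ 1 := by
  unfold aval
  rcases Nat.eq_zero_or_pos n with rfl | hn
  · simp
  · rw [div_le_one (by exact_mod_cast hn)]
    exact zetaR_le N n

lemma aval_mono_mem {n : ℕ} (h : n ∈ N) : aval N n ≤ aval N (n+1) := by
  rcases Nat.eq_zero_or_pos n with rfl | hn
  · simpa [aval] using aval_nonneg N 1
  · have hn' : (0:ℝ) < n := by exact_mod_cast hn
    have hz := zetaR_le N n
    have hz0 : (0:ℝ) ≤ ((N ∩ Iio n).ncard : ℝ) := by positivity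
    unfold aval
    rw [zeta_succ, if_pos h]
    push_cast
    rw [div_le_div_iff₀ hn' (by positivity)]
    nlinarith

lemma aval_anti_not_mem {n : ℕ} (h : n ∉ N) : aval N (n+1) ≤ aval N n := by
  rcases Nat.eq_zero_or_pos n with rfl | hn
  · unfold aval
    rw [zeta_succ, if_neg h, show Iio (0:ℕ) = ∅ from by ext k; simp]
    simp
  · have hn' : (0:ℝ) < n := by exact_mod_cast hn
    have hz0 : (0:ℝ) ≤ ((N ∩ Iio n).ncard : ℝ) := by positivity
    unfold aval
    rw [zeta_succ, if_neg h]
    push_cast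
    rw [add_zero]
    exact div_le_div_of_nonneg_left hz0 hn' (by linarith)

lemma aval_step (n : ℕ) : |aval N (n+1) - aval N n| ≤ 1/(n+1) := by
  rcases Nat.eq_zero_or_pos n with rfl | hn
  · unfold aval
    simp only [Nat.cast_zero, div_zero, sub_zero, zero_add, Nat.cast_one, div_one]
    rw [abs_of_nonneg (by positivity)]
    exact_mod_cast zetaR_le N 1
  · have hn' : (0:ℝ) < n := by exact_mod_cast hn
    have hz := zetaR_le N n
    have hz0 : (0:ℝ) ≤ ((N ∩ Iio n).ncard : ℝ) := by positivity
    unfold aval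
    rw [zeta_succ]
    by_cases h : n ∈ N
    · rw [if_pos h]
      push_cast
      rw [div_sub_div _ _ (by positivity) hn'.ne', abs_div,
        abs_of_pos (mul_pos (by positivity) hn'), div_le_div_iff₀ (mul_pos (by positivity) hn') (by positivity),
        abs_of_nonneg (by nlinarith)]
      nlinarith
    · rw [if_neg h]
      push_cast
      rw [add_zero, div_sub_div _ _ (by positivity) hn'.ne', abs_div,
        abs_of_pos (mul_pos (by positivity) hn'), div_le_div_iff₀ (mul_pos (by positivity) hn') (by positivity),
        abs_of_nonpos (by nlinarith)]
      nlinarith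

lemma aval_mono_run {m n : ℕ} (hmn : m ≤ n) (h : ∀ k, m ≤ k → k < n → k ∈ N) :
    aval N m ≤ aval N n := by
  induction n, hmn using Nat.le_induction with
  | base => exact le_rfl
  | succ n hmn ih =>
    exact le_trans (ih (fun k h1 h2 => h k h1 (by omega)))
      (aval_mono_mem N (h n hmn (by omega)))

lemma aval_anti_run {m n : ℕ} (hmn : m ≤ n) (h : ∀ k, m ≤ k → k < n → k ∉ N) :
    aval N n ≤ aval N m := by
  induction n, hmn using Nat.le_induction with
  | base => exact le_rfl
  | succ n hmn ih =>
    exact le_trans (aval_anti_not_mem N (h n hmn (by omega)))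
      (ih (fun k h1 h2 => h k h1 (by omega)))



section Struct

variable (N : Set ℕ) (t : ℕ → ℕ) (ht : StrictMono t)
    (hrep : N = {n | ∃ j : ℕ, t (2 * j) ≤ n ∧ n < t (2 * j + 1)})

include ht hrep

lemma mem_of {j k : ℕ} (h1 : t (2*j) ≤ k) (h2 : k < t (2*j+1)) : k ∈ N := by
  rw [hrep]; exact ⟨j, h1, h2⟩

lemma not_mem_of {j k : ℕ} (h1 : t (2*j+1) ≤ k) (h2 : k < t (2*j+2)) : k ∉ N := by
  rw [hrep]
  rintro ⟨j', hj1, hj2⟩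
  rcases le_or_gt j' j with hle | hlt
  · exact absurd hj2 (not_lt.mpr (le_trans (ht.monotone (by omega)) h1))
  · exact absurd hj1 (not_le.mpr (lt_of_lt_of_le h2 (ht.monotone (by omega))))

lemma peak_bound {j n : ℕ} (h1 : t (2*j) ≤ n) (h2 : n < t (2*j+2)) :
    aval N n ≤ aval N (t (2*j+1)) := by
  rcases le_total n (t (2*j+1)) with hc | hc
  · exact aval_mono_run N hc (fun k hk1 hk2 => mem_of N t ht hrep (le_trans h1 hk1) hk2)
  · exact aval_anti_run N hc (fun k hk1 hk2 =>
      not_mem_of N t ht hrep hk1 (lt_of_lt_of_le (lt_of_lt_of_le hk2 (le_of_lt h2)) le_rfl))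

lemma trough_bound {j n : ℕ} (h1 : t (2*j+1) ≤ n) (h2 : n < t (2*j+3)) :
    aval N (t (2*j+2)) ≤ aval N n := by
  rcases le_total n (t (2*j+2)) with hc | hc
  · exact aval_anti_run N hc (fun k hk1 hk2 =>
      not_mem_of N t ht hrep (le_trans h1 hk1) hk2)
  · refine aval_mono_run N hc (fun k hk1 hk2 => ?_)
    have : t (2*(j+1)) ≤ k ∧ k < t (2*(j+1)+1) := by
      constructor
      · calc t (2*(j+1)) = t (2*j+2) := by ring_nf
          _ ≤ k := hk1
      · calc k < n := hk2
          _ < t (2*j+3) := h2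
          _ = t (2*(j+1)+1) := by ring_nf
    rw [hrep]; exact ⟨j+1, this⟩

omit hrep

lemma exists_j {n : ℕ} (hn : t 0 ≤ n) : ∃ j, t (2*j) ≤ n ∧ n < t (2*j+2) := by
  classical
  set j := Nat.findGreatest (fun j => t (2*j) ≤ n) n with hj
  have hspec : t (2*j) ≤ n :=
    Nat.findGreatest_spec (P := fun j => t (2*j) ≤ n) (Nat.zero_le n) (by simpa using hn)
  refine ⟨j, hspec, ?_⟩
  rcases le_or_gt (j+1) n with hc | hc
  · have h2 : ¬ t (2*(j+1)) ≤ n := by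
      simpa using Nat.findGreatest_is_greatest (P := fun j => t (2*j) ≤ n) (Nat.lt_succ_self j) hc
    rw [show 2*j+2 = 2*(j+1) from by ring]
    omega
  · have h1 : 2*j+2 ≤ t (2*j+2) := ht.le_apply
    omega

lemma exists_j' {n : ℕ} (hn : t 1 ≤ n) : ∃ j, t (2*j+1) ≤ n ∧ n < t (2*j+3) := by
  classical
  set j := Nat.findGreatest (fun j => t (2*j+1) ≤ n) n with hj
  have hspec : t (2*j+1) ≤ n :=
    Nat.findGreatest_spec (P := fun j => t (2*j+1) ≤ n) (Nat.zero_le n) (by simpa using hn)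
  refine ⟨j, hspec, ?_⟩
  rcases le_or_gt (j+1) n with hc | hc
  · have h2 : ¬ t (2*(j+1)+1) ≤ n := by
      simpa using Nat.findGreatest_is_greatest (P := fun j => t (2*j+1) ≤ n) (Nat.lt_succ_self j) hc
    rw [show 2*j+3 = 2*(j+1)+1 from by ring]
    omega
  · have h1 : 2*j+3 ≤ t (2*j+3) := ht.le_apply
    omega

end Struct



section LS

variable (N : Set ℕ) (t : ℕ → ℕ) (ht : StrictMono t)
    (hrep : N = {n | ∃ j : ℕ, t (2 * j) ≤ n ∧ n < t (2 * j + 1)})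

include ht hrep

lemma limsup_eq_peak :
    limsup (aval N) atTop = limsup (fun i => aval N (t (2*i+1))) atTop := by
  set b := fun i => aval N (t (2*i+1)) with hb
  have hbddA : IsBoundedUnder (· ≤ ·) atTop (aval N) :=
    isBoundedUnder_of ⟨1, aval_le_one N⟩
  have hbddA' : IsBoundedUnder (· ≥ ·) atTop (aval N) :=
    isBoundedUnder_of ⟨0, aval_nonneg N⟩
  have hbddB : IsBoundedUnder (· ≤ ·) atTop b := isBoundedUnder_of ⟨1, fun i => aval_le_one N _⟩
  have hbddB' : IsBoundedUnder (· ≥ ·) atTop b := isBoundedUnder_of ⟨0, fun i => aval_nonneg N _⟩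
  apply le_antisymm
  · -- limsup a ≤ limsup b
    by_contra hcon
    push_neg at hcon
    obtain ⟨c, hc1, hc2⟩ := exists_between hcon
    have hev : ∀ᶠ i in atTop, b i < c := eventually_lt_of_limsup_lt hc1 hbddB
    obtain ⟨I, hI⟩ := eventually_atTop.mp hev
    have hevA : ∀ᶠ n in atTop, aval N n ≤ c := by
      rw [eventually_atTop]
      refine ⟨t (2*I), fun n hn => ?_⟩
      obtain ⟨j, hj1, hj2⟩ := exists_j t ht (le_trans (ht.monotone (Nat.zero_le _)) hn)
      have hIj : I ≤ j := by
        by_contra hIj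
        push_neg at hIj
        exact absurd (lt_of_le_of_lt hn hj2) (not_lt.mpr (ht.monotone (by omega)))
      exact le_trans (peak_bound N t ht hrep hj1 hj2) (le_of_lt (hI j hIj))
    have := limsup_le_of_le hbddA'.isCoboundedUnder_le hevA
    linarith
  · -- limsup b ≤ limsup a
    by_contra hcon
    push_neg at hcon
    obtain ⟨c, hc1, hc2⟩ := exists_between hcon
    have hev : ∀ᶠ n in atTop, aval N n < c := eventually_lt_of_limsup_lt hc1 hbddA
    have htend : Tendsto (fun i => t (2*i+1)) atTop atTop :=
      (ht.comp (fun i j hij => by dsimp only; omega : StrictMono fun i => 2*i+1)).tendsto_atTop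
    have hevB : ∀ᶠ i in atTop, b i ≤ c :=
      (htend.eventually hev).mono fun i hi => le_of_lt hi
    have := limsup_le_of_le hbddB'.isCoboundedUnder_le hevB
    linarith

lemma liminf_eq_trough :
    liminf (aval N) atTop = liminf (fun i => aval N (t (2*i+2))) atTop := by
  set b := fun i => aval N (t (2*i+2)) with hb
  have hbddA : IsBoundedUnder (· ≤ ·) atTop (aval N) :=
    isBoundedUnder_of ⟨1, aval_le_one N⟩
  have hbddA' : IsBoundedUnder (· ≥ ·) atTop (aval N) :=
    isBoundedUnder_of ⟨0, aval_nonneg N⟩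
  have hbddB : IsBoundedUnder (· ≤ ·) atTop b := isBoundedUnder_of ⟨1, fun i => aval_le_one N _⟩
  have hbddB' : IsBoundedUnder (· ≥ ·) atTop b := isBoundedUnder_of ⟨0, fun i => aval_nonneg N _⟩
  apply le_antisymm
  · -- liminf a ≤ liminf b  (subsequence direction)
    by_contra hcon
    push_neg at hcon
    obtain ⟨c, hc1, hc2⟩ := exists_between hcon
    have hev : ∀ᶠ n in atTop, c < aval N n := eventually_lt_of_lt_liminf hc2 hbddA'
    have htend : Tendsto (fun i => t (2*i+2)) atTop atTop :=
      (ht.comp (fun i j hij => by dsimp only; omega : StrictMono fun i => 2*i+2)).tendsto_atTop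
    have hevB : ∀ᶠ i in atTop, c ≤ b i :=
      (htend.eventually hev).mono fun i hi => le_of_lt hi
    have := le_liminf_of_le hbddB.isCoboundedUnder_ge hevB
    linarith
  · -- liminf b ≤ liminf a
    by_contra hcon
    push_neg at hcon
    obtain ⟨c, hc1, hc2⟩ := exists_between hcon
    have hev : ∀ᶠ i in atTop, c < b i := eventually_lt_of_lt_liminf hc2 hbddB'
    obtain ⟨I, hI⟩ := eventually_atTop.mp hev
    have hevA : ∀ᶠ n in atTop, c ≤ aval N n := by
      rw [eventually_atTop]
      refine ⟨t (2*I+1), fun n hn => ?_⟩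
      obtain ⟨j, hj1, hj2⟩ := exists_j' t ht (le_trans (ht.monotone (by omega)) hn)
      have hIj : I ≤ j := by
        by_contra hIj
        push_neg at hIj
        exact absurd (lt_of_le_of_lt hn hj2) (not_lt.mpr (ht.monotone (by omega)))
      exact le_trans (le_of_lt (hI j hIj)) (trough_bound N t ht hrep hj1 hj2)
    have := le_liminf_of_le hbddA.isCoboundedUnder_ge hevA
    linarith

end LS


end Stmt16

/-- Let `N ⊆ ℕ` with `N` and `Nᶜ` both infinite, written as the
disjoint union of its maximal integer intervals `[t_{2j}, t_{2j+1}) ∩ ℕ` where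
`t_0 < t_1 < t_2 < ⋯`. With `ζ_n(N) = #(N ∩ [0,n))` and `e_{N,i} = ζ_{t_{i+1}}(N)`,
the density spectrum of `N` (the set of limit points of `(ζ_n(N)/n)_n`) equals
`[liminf_i e_{N,2i+1}/t_{2i+2}, limsup_i e_{N,2i}/t_{2i+1}]`. -/
theorem statement_16 (N : Set ℕ) (hNinf : N.Infinite) (hNcinf : Nᶜ.Infinite)
    (t : ℕ → ℕ) (ht : StrictMono t)
    (hrep : N = {n | ∃ j : ℕ, t (2 * j) ≤ n ∧ n < t (2 * j + 1)}) :
    {r : ℝ | MapClusterPt r atTop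
        (fun n : ℕ => ((N ∩ Set.Iio n).ncard : ℝ) / n)} =
      Set.Icc
        (liminf (fun i : ℕ =>
          ((N ∩ Set.Iio (t (2 * i + 2))).ncard : ℝ) / t (2 * i + 2)) atTop)
        (limsup (fun i : ℕ =>
          ((N ∩ Set.Iio (t (2 * i + 1))).ncard : ℝ) / t (2 * i + 1)) atTop) := by
  have hstep : ∀ ε > 0, ∀ᶠ n in atTop, |Stmt16.aval N (n+1) - Stmt16.aval N n| < ε := by
    intro ε hε
    have h0 : Tendsto (fun n : ℕ => 1/((n:ℝ)+1)) atTop (nhds 0) :=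
      tendsto_one_div_add_atTop_nhds_zero_nat
    exact (h0.eventually (gt_mem_nhds hε)).mono fun n hn =>
      lt_of_le_of_lt (Stmt16.aval_step N n) hn
  have key := Stmt16.clusterSet_eq (Stmt16.aval N) (Stmt16.aval_nonneg N)
    (Stmt16.aval_le_one N) hstep
  have h1 := Stmt16.limsup_eq_peak N t ht hrep
  have h2 := Stmt16.liminf_eq_trough N t ht hrep
  show {r : ℝ | MapClusterPt r atTop (Stmt16.aval N)} =
      Set.Icc (liminf (fun i : ℕ => Stmt16.aval N (t (2 * i + 2))) atTop)
        (limsup (fun i : ℕ => Stmt16.aval N (t (2 * i + 1))) atTop)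
  rw [← h1, ← h2]
  exact key

end
end
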